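/- arXiv:2303.09019 — 4 statements merged into one kernel-verified Lean document; each statement's English description precedes it below -/
import Mathlib

section
/- Let c be an ℕ-vector. (i) Substituting x_i = 0 for all i ≤ 0 into the back stable slide 𝔉⃖_c yields the slide polynomial 𝔉_c if the support of c is contained in ℤ_{>0}, and yields 0 otherwise. (ii) For b ≥ 0 let γ^b(c) be the ℕ-vector with γ^b(c)_i = c_{i−b}; then for every monomial in the variables (x_i)_{i≥1}, the coefficient of that monomial in the slide polynomial 𝔉_{γ^b(c)} equals, for all sufficiently large b, its coefficient in the fundamental quasisymmetric series F_{flatten(c)}(x_+) in the variables (x_i)_{i≥1}. -/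
/-- The back stable slide `𝔉⃖(W)` of an injective word `W` over `ℤ × ℤ_{>0}`
(ordered lexicographically, with `val (i,j) = i`): the formal power series
`∑ x_{i₁}⋯x_{i_r}` over integer sequences `i₁ ≥ ⋯ ≥ i_r` with `i_j > i_{j+1}` whenever
`a_j > a_{j+1}` and `i_j ≤ val (a_j)` for all `j`, given coefficientwise. -/
noncomputable def backSlideW (W : List (ℤ ×ₗ ℕ+)) : MvPowerSeries ℤ ℚ :=
  fun m => (Nat.card {g : Fin W.length → ℤ // Antitone g ∧
    (∀ j k : Fin W.length, (k : ℕ) = (j : ℕ) + 1 → W.get k < W.get j → g k < g j) ∧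
    (∀ j, g j ≤ (ofLex (W.get j)).1) ∧
    (∑ j, Finsupp.single (g j) 1) = m} : ℚ)

/-- The slide polynomial `𝔉(W)` of an injective word `W` over `ℤ × ℤ_{>0}`: as
`backSlideW`, but with all variables positively indexed (`i_r ≥ 1`). -/
noncomputable def slideW (W : List (ℤ ×ₗ ℕ+)) : MvPowerSeries ℤ ℚ :=
  fun m => (Nat.card {g : Fin W.length → ℤ // (∀ j, 1 ≤ g j) ∧ Antitone g ∧
    (∀ j k : Fin W.length, (k : ℕ) = (j : ℕ) + 1 → W.get k < W.get j → g k < g j) ∧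
    (∀ j, g j ≤ (ofLex (W.get j)).1) ∧
    (∑ j, Finsupp.single (g j) 1) = m} : ℚ)

/-- The injective word `W_c` of an `ℕ`-vector `c : ℤ →₀ ℕ`: it lists the letters `(i,j)`
with `c i > 0` and `1 ≤ j ≤ c i`, with `i` decreasing and, for fixed `i`, `j`
increasing. -/
noncomputable def WcZ (c : ℤ →₀ ℕ) : List (ℤ ×ₗ ℕ+) :=
  ((c.support.sort (· ≤ ·)).reverse.map
    (fun i => (List.range (c i)).map (fun j => toLex (i, j.succPNat)))).flatten

/-- The back stable slide `𝔉⃖_c = 𝔉⃖(W_c)` of an `ℕ`-vector `c`. -/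
noncomputable def backSlideC (c : ℤ →₀ ℕ) : MvPowerSeries ℤ ℚ := backSlideW (WcZ c)

/-- The slide polynomial `𝔉_c = 𝔉(W_c)` of an `ℕ`-vector `c`, in the variables
`(x_i)_{i ≥ 1}`. -/
noncomputable def slideC (c : ℤ →₀ ℕ) : MvPowerSeries ℤ ℚ := slideW (WcZ c)

/-- `flatten c`: the composition formed by the positive entries of `c`, read in
increasing order of the index. -/
noncomputable def flattenC (c : ℤ →₀ ℕ) : List ℕ+ :=
  (c.support.sort (· ≤ ·)).attach.map
    (fun i => ⟨c i.1, Nat.pos_of_ne_zero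
      (Finsupp.mem_support_iff.mp ((Finset.mem_sort _).mp i.2))⟩)

/-- The fundamental quasisymmetric series `F_{r,S}(x_I)` in the variables `(x_i)_{i ∈ I}`,
`I ⊆ ℤ`, given coefficientwise. -/
noncomputable def FqrS (r : ℕ) (S : Set ℕ) (I : Set ℤ) : MvPowerSeries ℤ ℚ :=
  fun m => (Nat.card {g : Fin r → ℤ // (∀ j, g j ∈ I) ∧ Monotone g ∧
    (∀ j k : Fin r, (k : ℕ) = (j : ℕ) + 1 → ((j : ℕ) + 1) ∈ S → g j < g k) ∧
    (∑ j, Finsupp.single (g j) 1) = m} : ℚ)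

/-- The subset `S(α) = {α₁, α₁+α₂, …, α₁+⋯+α_{ℓ−1}}` of `{1,…,|α|−1}` attached to a
composition `α`. -/
def compS (α : List ℕ+) : Set ℕ :=
  {s | ∃ k : ℕ, 0 < k ∧ k < α.length ∧ s = ((α.take k).map (fun a => (a : ℕ))).sum}

/-- The fundamental quasisymmetric series `F_α(x_I)` of a composition `α`. -/
noncomputable def Fcomp (α : List ℕ+) (I : Set ℤ) : MvPowerSeries ℤ ℚ :=
  FqrS ((α.map (fun a => (a : ℕ))).sum) (compS α) I

lemma flatten_descent {X : Type*} [LinearOrder X] (bs : List (List X))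
    (hne : ∀ A ∈ bs, A ≠ []) (hmono : ∀ A ∈ bs, A.Chain' (· ≤ ·))
    (hsep : bs.Chain' (fun A B => ∀ x ∈ A, ∀ y ∈ B, y < x)) :
    ∀ n, (h1 : n + 1 < bs.flatten.length) →
      (bs.flatten[n + 1]'h1 < bs.flatten[n]'(Nat.lt_of_succ_lt h1) ↔
        ∃ k, 0 < k ∧ k < bs.length ∧ n + 1 = ((bs.take k).map List.length).sum) := by
  induction bs with
  | nil => intro n h1; simp at h1
  | cons A bs IH0 =>
    intro n h1
    have hlen : (A :: bs).flatten.length = A.length + bs.flatten.length := by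
      simp [List.flatten_cons]
    rcases lt_trichotomy (n + 1) A.length with hc | hc | hc
    · -- inside the first block: no descent, no partial sum
      have key : A[n]'(by omega) ≤ A[n + 1]'hc := by
        have h := hmono A List.mem_cons_self
        replace h := List.isChain_iff_getElem.mp h
        simpa using h n (by omega)
      have e0 : (A :: bs).flatten[n]'(Nat.lt_of_succ_lt h1) = A[n]'(by omega) := by
        simp only [List.flatten_cons]
        exact List.getElem_append_left (by omega)
      have e1 : (A :: bs).flatten[n + 1]'h1 = A[n + 1]'hc := by
        simp only [List.flatten_cons]
        exact List.getElem_append_left hc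
      rw [e0, e1]
      constructor
      · intro hlt; exact absurd hlt (not_lt.2 key)
      · rintro ⟨k, hk0, hkl, hsum⟩
        exfalso
        obtain ⟨k', rfl⟩ : ∃ k', k = k' + 1 := ⟨k - 1, by omega⟩
        rw [List.take_succ_cons, List.map_cons, List.sum_cons] at hsum
        omega
    · -- boundary between first and second block
      obtain ⟨B, bs', rfl⟩ : ∃ B bs', bs = B :: bs' := by
        cases bs with
        | nil => exfalso; rw [hlen] at h1; simp at h1; omega
        | cons B bs' => exact ⟨B, bs', rfl⟩
      have hBne : B ≠ [] := hne B (by simp)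
      have hB0 : 0 < B.length := List.length_pos_iff.2 hBne
      have e0 : (A :: B :: bs').flatten[n]'(Nat.lt_of_succ_lt h1) = A[n]'(by omega) := by
        simp only [List.flatten_cons]
        exact List.getElem_append_left (by omega)
      have e1 : (A :: B :: bs').flatten[n + 1]'h1 = B[0]'hB0 := by
        simp only [List.flatten_cons]
        rw [List.getElem_append_right (by omega)]
        simp only [show n + 1 - A.length = 0 from by omega]
        exact List.getElem_append_left hB0
      rw [e0, e1]
      have hrel : ∀ x ∈ A, ∀ y ∈ B, y < x := (List.isChain_cons_cons.mp hsep).1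
      refine iff_of_true (hrel _ (List.getElem_mem _) _ (List.getElem_mem _)) ⟨1, ?_, ?_, ?_⟩
      · omega
      · simp only [List.length_cons]; omega
      · simp [hc]
    · -- inside the tail
      have hAn : A.length ≤ n := by omega
      have h1' : (n - A.length) + 1 < bs.flatten.length := by omega
      have e0 : (A :: bs).flatten[n]'(Nat.lt_of_succ_lt h1)
          = bs.flatten[n - A.length]'(Nat.lt_of_succ_lt h1') := by
        simp only [List.flatten_cons]
        exact List.getElem_append_right hAn
      have e1 : (A :: bs).flatten[n + 1]'h1 = bs.flatten[(n - A.length) + 1]'h1' := by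
        simp only [List.flatten_cons]
        rw [List.getElem_append_right (by omega)]
        simp only [show n + 1 - A.length = (n - A.length) + 1 from by omega]
      have IH := IH0 (fun C hC => hne C (List.mem_cons_of_mem _ hC))
        (fun C hC => hmono C (List.mem_cons_of_mem _ hC)) hsep.tail (n - A.length) h1'
      rw [e0, e1, IH]
      clear IH e0 e1
      constructor
      · rintro ⟨k, hk0, hkl, hsum⟩
        refine ⟨k + 1, by omega, by simp only [List.length_cons]; omega, ?_⟩
        rw [List.take_succ_cons, List.map_cons, List.sum_cons]
        omega
      · rintro ⟨k, hk0, hkl, hsum⟩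
        obtain ⟨k', rfl⟩ : ∃ k', k = k' + 1 := ⟨k - 1, by omega⟩
        rw [List.take_succ_cons, List.map_cons, List.sum_cons] at hsum
        have hk'0 : 0 < k' := by
          rcases Nat.eq_zero_or_pos k' with h0 | h0
          · exfalso; subst h0; simp at hsum; omega
          · exact h0
        exact ⟨k', hk'0, by simp only [List.length_cons] at hkl; omega, by omega⟩


noncomputable def blockf (c : ℤ →₀ ℕ) (i : ℤ) : List (ℤ ×ₗ ℕ+) :=
  (List.range (c i)).map (fun j => toLex (i, j.succPNat))

lemma WcZ_def (c : ℤ →₀ ℕ) :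
    WcZ c = ((c.support.sort (· ≤ ·)).reverse.map (blockf c)).flatten := rfl

noncomputable def McL (c : ℤ →₀ ℕ) : List ℕ :=
  (c.support.sort (· ≤ ·)).map (fun i => c i)

lemma length_blockf (c : ℤ →₀ ℕ) (i : ℤ) : (blockf c i).length = c i := by
  simp [blockf]

lemma blocks_map_length (c : ℤ →₀ ℕ) :
    ((c.support.sort (· ≤ ·)).reverse.map (blockf c)).map List.length
      = (McL c).reverse := by
  rw [List.map_map, McL, ← List.map_reverse]
  refine List.map_congr_left fun i _ => length_blockf c i

lemma length_WcZ (c : ℤ →₀ ℕ) : (WcZ c).length = (McL c).sum := by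
  rw [WcZ_def, List.length_flatten, blocks_map_length, List.sum_reverse]

lemma ne_nil_blocks (c : ℤ →₀ ℕ) :
    ∀ A ∈ (c.support.sort (· ≤ ·)).reverse.map (blockf c), A ≠ [] := by
  intro A hA
  rw [List.mem_map] at hA
  obtain ⟨i, hi, rfl⟩ := hA
  rw [List.mem_reverse, Finset.mem_sort] at hi
  have hpos : 0 < c i := Nat.pos_of_ne_zero (Finsupp.mem_support_iff.mp hi)
  rw [← List.length_pos_iff, length_blockf]
  exact hpos

lemma chain_blockf (c : ℤ →₀ ℕ) (i : ℤ) : (blockf c i).Chain' (· ≤ ·) := by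
  apply List.Pairwise.isChain
  exact List.Pairwise.map _
    (fun a b hab => Prod.Lex.le_iff.2
      (Or.inr ⟨rfl, Nat.succPNat_le_succPNat.2 hab.le⟩))
    List.pairwise_lt_range

lemma sep_blocks (c : ℤ →₀ ℕ) :
    ((c.support.sort (· ≤ ·)).reverse.map (blockf c)).Chain'
      (fun A B => ∀ x ∈ A, ∀ y ∈ B, y < x) := by
  apply List.Pairwise.isChain
  have hp : ((c.support.sort (· ≤ ·)).reverse).Pairwise (fun a b => b < a) :=
    List.pairwise_reverse.2 (Finset.sortedLT_sort c.support).pairwise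
  refine List.Pairwise.map _ (fun a b hba x hx y hy => ?_) hp
  rw [blockf, List.mem_map] at hx hy
  obtain ⟨ja, -, rfl⟩ := hx
  obtain ⟨jb, -, rfl⟩ := hy
  exact Prod.Lex.lt_iff.2 (Or.inl hba)

lemma fst_mem {c : ℤ →₀ ℕ} {x : ℤ ×ₗ ℕ+} (hx : x ∈ WcZ c) :
    (ofLex x).1 ∈ c.support := by
  rw [WcZ_def, List.mem_flatten] at hx
  obtain ⟨A, hA, hxA⟩ := hx
  rw [List.mem_map] at hA
  obtain ⟨i, hi, rfl⟩ := hA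
  rw [blockf, List.mem_map] at hxA
  obtain ⟨j, -, rfl⟩ := hxA
  rw [List.mem_reverse, Finset.mem_sort] at hi
  simpa using hi

lemma exists_pos (c : ℤ →₀ ℕ) {i : ℤ} (hi : i ∈ c.support) :
    ∃ j : Fin (WcZ c).length, (ofLex ((WcZ c).get j)).1 = i := by
  have hx : toLex (i, (0 : ℕ).succPNat) ∈ WcZ c := by
    rw [WcZ_def, List.mem_flatten]
    refine ⟨blockf c i, List.mem_map.2 ⟨i, ?_, rfl⟩, ?_⟩
    · rw [List.mem_reverse, Finset.mem_sort]; exact hi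
    · rw [blockf]
      exact List.mem_map.2 ⟨0, List.mem_range.2
        (Nat.pos_of_ne_zero (Finsupp.mem_support_iff.mp hi)), rfl⟩
  obtain ⟨j, hj⟩ := List.mem_iff_get.mp hx
  exact ⟨j, by rw [hj]; simp⟩

lemma flattenC_map (c : ℤ →₀ ℕ) :
    (flattenC c).map (fun (a : ℕ+) => (a : ℕ)) = McL c := by
  unfold flattenC McL
  exact (List.map_map ..).trans List.attach_map_val

lemma flattenC_length (c : ℤ →₀ ℕ) :
    (flattenC c).length = (c.support.sort (· ≤ ·)).length := by
  unfold flattenC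
  exact (List.length_map ..).trans (List.length_attach ..)

lemma coeM_map (l : List ℕ+) :
    (List.map (fun a => a) (l >>= fun a => pure ((a : ℕ)))) = l.map (fun (a : ℕ+) => (a : ℕ)) := by
  simp only [List.map_id']
  rw [bind_pure_comp]
  simp [List.map_eq_map]

lemma compS_char (c : ℤ →₀ ℕ) (s : ℕ) :
    s ∈ compS (flattenC c) ↔
      ∃ k, 0 < k ∧ k < (c.support.sort (· ≤ ·)).length ∧ s = ((McL c).take k).sum := by
  have key : ∀ k, ((List.take k (flattenC c)).map (fun (a : ℕ+) => (a : ℕ))).sum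
      = ((McL c).take k).sum := by
    intro k; rw [List.map_take, flattenC_map]
  unfold compS
  simp only [Set.mem_setOf_eq, coeM_map, flattenC_length]
  constructor
  · rintro ⟨k, h0, hl, hs⟩
    exact ⟨k, h0, hl, by rw [hs, key]⟩
  · rintro ⟨k, h0, hl, hs⟩
    exact ⟨k, h0, hl, by rw [hs, key]⟩

lemma take_reverse_sum (M : List ℕ) (k : ℕ) :
    (M.reverse.take k).sum + (M.take (M.length - k)).sum = M.sum := by
  rw [List.take_reverse, List.sum_reverse]
  have h := List.sum_take_add_sum_drop M (M.length - k)
  omega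

lemma desc_WcZ (c : ℤ →₀ ℕ) {n : ℕ} (h1 : n + 1 < (WcZ c).length) :
    ((WcZ c)[n + 1]'h1 < (WcZ c)[n]'(Nat.lt_of_succ_lt h1) ↔
      (McL c).sum - (n + 1) ∈ compS (flattenC c)) := by
  have h1' : n + 1 < (((c.support.sort (· ≤ ·)).reverse.map (blockf c)).flatten).length := h1
  have main := flatten_descent _ (ne_nil_blocks c)
    (fun A hA => by
      obtain ⟨i, -, rfl⟩ := List.mem_map.mp hA
      exact chain_blockf c i)
    (sep_blocks c) n h1'
  have hns : n + 1 < (McL c).sum := by rw [← length_WcZ]; exact h1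
  have hMl : (McL c).length = (c.support.sort (· ≤ ·)).length := List.length_map _
  have step2 : (∃ k, 0 < k ∧ k < ((c.support.sort (· ≤ ·)).reverse.map (blockf c)).length ∧
      n + 1 = (((((c.support.sort (· ≤ ·)).reverse.map (blockf c))).take k).map List.length).sum)
      ↔ (McL c).sum - (n + 1) ∈ compS (flattenC c) := by
    have hbl : ((c.support.sort (· ≤ ·)).reverse.map (blockf c)).length
        = (c.support.sort (· ≤ ·)).length := by
      rw [List.length_map, List.length_reverse]
    have hbt : ∀ k, (((((c.support.sort (· ≤ ·)).reverse.map (blockf c))).take k).map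
        List.length).sum = (((McL c).reverse).take k).sum := by
      intro k
      rw [List.map_take, blocks_map_length]
    rw [compS_char]
    simp only [hbl, hbt]
    constructor
    · rintro ⟨k, hk0, hkl, he⟩
      have hf := take_reverse_sum (McL c) k
      rw [hMl] at hf
      exact ⟨(c.support.sort (· ≤ ·)).length - k, by omega, by omega, by omega⟩
    · rintro ⟨k', hk0, hkl, he⟩
      have hf := take_reverse_sum (McL c) ((McL c).length - k')
      have hll : (McL c).length - ((McL c).length - k') = k' := by omega
      rw [hll, hMl] at hf
      exact ⟨(c.support.sort (· ≤ ·)).length - k', by omega, by omega, by omega⟩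
  exact main.trans step2

def shiftEmb (b : ℤ) : ℤ ↪ ℤ := ⟨fun i => i + b, fun x y h => by simpa using h⟩

lemma support_shift (c : ℤ →₀ ℕ) (b : ℤ) :
    (Finsupp.mapDomain (fun i : ℤ => i + b) c).support = c.support.map (shiftEmb b) := by
  have h : Finsupp.mapDomain (fun i : ℤ => i + b) c = Finsupp.embDomain (shiftEmb b) c := by
    rw [Finsupp.embDomain_eq_mapDomain]; rfl
  rw [h, Finsupp.support_embDomain]

lemma sort_map_shift (s : Finset ℤ) (b : ℤ) :
    (s.map (shiftEmb b)).sort (· ≤ ·) = (s.sort (· ≤ ·)).map (fun i => i + b) := by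
  refine (fun hp hs => List.Perm.eq_of_pairwise' (Finset.pairwise_sort _ _) hs hp) ?_ ?_
  · rw [← Multiset.coe_eq_coe]
    calc ((s.map (shiftEmb b)).sort (· ≤ ·) : Multiset ℤ)
        = (s.map (shiftEmb b)).val := Finset.sort_eq _ _
      _ = s.val.map (shiftEmb b) := Finset.map_val _ _
      _ = ((s.sort (· ≤ ·) : Multiset ℤ)).map (fun i => i + b) := by rw [Finset.sort_eq]; rfl
      _ = ((s.sort (· ≤ ·)).map (fun i => i + b) : List ℤ) := Multiset.map_coe _ _
  · exact List.Pairwise.map _ (fun x y (h : x ≤ y) => by simpa using h)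
      (Finset.pairwise_sort s (· ≤ ·))

lemma McL_shift (c : ℤ →₀ ℕ) (b : ℤ) :
    McL (Finsupp.mapDomain (fun i : ℤ => i + b) c) = McL c := by
  unfold McL
  rw [support_shift, sort_map_shift, List.map_map]
  refine List.map_congr_left fun i _ => ?_
  exact Finsupp.mapDomain_apply (fun x y h => by simpa using h) c i

lemma sort_length_shift (c : ℤ →₀ ℕ) (b : ℤ) :
    ((Finsupp.mapDomain (fun i : ℤ => i + b) c).support.sort (· ≤ ·)).length
      = (c.support.sort (· ≤ ·)).length := by
  rw [support_shift, sort_map_shift, List.length_map]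

lemma compS_shift (c : ℤ →₀ ℕ) (b : ℤ) :
    compS (flattenC (Finsupp.mapDomain (fun i : ℤ => i + b) c)) = compS (flattenC c) := by
  ext s
  rw [compS_char, compS_char, sort_length_shift, McL_shift]

lemma mem_support_of_sum_single {r : ℕ} {g : Fin r → ℤ} {m : ℤ →₀ ℕ}
    (h : (∑ j, Finsupp.single (g j) 1) = m) (j : Fin r) : g j ∈ m.support := by
  rw [Finsupp.mem_support_iff, ← h, Finsupp.finset_sum_apply]
  have h1 : (1 : ℕ) ≤ ∑ j' : Fin r, (Finsupp.single (g j') 1) (g j) := by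
    refine le_trans (le_of_eq ?_) (Finset.single_le_sum
      (f := fun j' => (Finsupp.single (g j') 1) (g j)) (fun _ _ => Nat.zero_le _)
      (Finset.mem_univ j))
    simp
  omega

/-- (i) Substituting `x_i = 0` for all `i ≤ 0` into `𝔉⃖_c` (i.e. looking at the
coefficients of monomials supported on `ℤ_{>0}`) yields `𝔉_c` if the support of `c` is
contained in `ℤ_{>0}`, and `0` otherwise.
(ii) For the shift `γ^b(c)_i = c_{i−b}`, the coefficient of any monomial in the
variables `(x_i)_{i≥1}` in `𝔉_{γ^b(c)}` equals, for all sufficiently large `b`, its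
coefficient in `F_{flatten c}(x_+)`. -/
theorem eta_pi_backSlide (c : ℤ →₀ ℕ) :
    (∀ m : ℤ →₀ ℕ, (∀ i ∈ m.support, 0 < i) →
      (((∀ i ∈ c.support, 0 < i) →
          MvPowerSeries.coeff m (backSlideC c) = MvPowerSeries.coeff m (slideC c)) ∧
       (¬ (∀ i ∈ c.support, 0 < i) →
          MvPowerSeries.coeff m (backSlideC c) = 0))) ∧
    (∀ m : ℤ →₀ ℕ, (∀ i ∈ m.support, 0 < i) →
      ∃ B : ℕ, ∀ b : ℕ, B ≤ b →
        MvPowerSeries.coeff m (slideC (Finsupp.mapDomain (fun i => i + (b : ℤ)) c)) =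
          MvPowerSeries.coeff m (Fcomp (flattenC c) {i : ℤ | 0 < i})) := by
  constructor
  · intro m hm
    constructor
    · intro _
      simp only [backSlideC, backSlideW, slideC, slideW, MvPowerSeries.coeff_apply]
      rw [Nat.cast_inj]
      refine Nat.card_congr (Equiv.subtypeEquivRight fun g => ?_)
      constructor
      · rintro ⟨h1, h2, h3, h4⟩
        refine ⟨fun j => ?_, h1, h2, h3, h4⟩
        have hs := hm _ (mem_support_of_sum_single h4 j)
        omega
      · rintro ⟨-, h⟩
        exact h
    · intro hc
      simp only [backSlideC, backSlideW, MvPowerSeries.coeff_apply]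
      push_neg at hc
      obtain ⟨i₀, hi₀, hle⟩ := hc
      norm_cast
      rw [Nat.card_eq_zero]
      left
      refine ⟨fun x => ?_⟩
      obtain ⟨g, -, -, hub, hsum⟩ := x
      obtain ⟨j, hj⟩ := exists_pos c hi₀
      have h1 := hub j
      rw [hj] at h1
      have h2 := hm _ (mem_support_of_sum_single hsum j)
      omega
  · intro m hm
    classical
    refine ⟨m.support.sup (fun x => c.support.sup fun i => (x - i).toNat), fun b hb => ?_⟩
    set c' := Finsupp.mapDomain (fun i : ℤ => i + (b : ℤ)) c with hc'
    simp only [slideC, slideW, Fcomp, FqrS, MvPowerSeries.coeff_apply]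
    rw [Nat.cast_inj]
    have hMc' : (McL c').sum = (McL c).sum := by rw [hc', McL_shift]
    have hlen' : (WcZ c').length = (McL c').sum := length_WcZ c'
    have hRr : (List.map (fun a => a) ((flattenC c) >>= fun a => pure ((a : ℕ)))).sum
        = (WcZ c').length := by
      rw [coeM_map, flattenC_map, hlen', hMc']
    have hsum_r' : (McL c').sum = (WcZ c').length := hlen'.symm
    let e : Fin ((List.map (fun a => a) ((flattenC c) >>= fun a => pure ((a : ℕ)))).sum)
        ≃ Fin (WcZ c').length :=
      ⟨fun t => ⟨(WcZ c').length - ((t : ℕ) + 1), by have := t.isLt; omega⟩,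
       fun j => ⟨(List.map (fun a => a) ((flattenC c) >>= fun a => pure ((a : ℕ)))).sum
          - ((j : ℕ) + 1), by have := j.isLt; omega⟩,
       fun t => Fin.ext (show (List.map (fun a => a)
          ((flattenC c) >>= fun a => pure ((a : ℕ)))).sum
          - ((WcZ c').length - ((t : ℕ) + 1) + 1) = (t : ℕ) from by have := t.isLt; omega),
       fun j => Fin.ext (show (WcZ c').length
          - ((List.map (fun a => a) ((flattenC c) >>= fun a => pure ((a : ℕ)))).sum
            - ((j : ℕ) + 1) + 1) = (j : ℕ) from by have := j.isLt; omega)⟩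
    have he : ∀ t, ((e t : Fin (WcZ c').length) : ℕ) = (WcZ c').length - ((t : ℕ) + 1) :=
      fun _ => rfl
    have hes : ∀ j : Fin (WcZ c').length, ((e.symm j) : ℕ)
        = (List.map (fun a => a) ((flattenC c) >>= fun a => pure ((a : ℕ)))).sum
          - ((j : ℕ) + 1) := fun _ => rfl
    have hshift : compS (flattenC c') = compS (flattenC c) := by
      rw [hc']; exact compS_shift c _
    have hsupp : c'.support = c.support.map (shiftEmb (b : ℤ)) := by
      rw [hc']; exact support_shift c _
    have key : ∀ g : Fin (WcZ c').length → ℤ,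
        ((∀ j, 1 ≤ g j) ∧ Antitone g ∧
          (∀ j k : Fin (WcZ c').length, (k : ℕ) = (j : ℕ) + 1 →
            (WcZ c').get k < (WcZ c').get j → g k < g j) ∧
          (∀ j, g j ≤ (ofLex ((WcZ c').get j)).1) ∧
          (∑ j, Finsupp.single (g j) 1) = m) ↔
        ((∀ t, g (e t) ∈ {i : ℤ | 0 < i}) ∧ Monotone (fun t => g (e t)) ∧
          (∀ t u : Fin ((List.map (fun a => a)
              ((flattenC c) >>= fun a => pure ((a : ℕ)))).sum),
            (u : ℕ) = (t : ℕ) + 1 → ((t : ℕ) + 1) ∈ compS (flattenC c) →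
              g (e t) < g (e u)) ∧
          (∑ t, Finsupp.single (g (e t)) 1) = m) := by
      intro g
      constructor
      · rintro ⟨hpos, hanti, hdesc, hub, hsum⟩
        refine ⟨fun t => ?_, ?_, ?_, ?_⟩
        · have := hpos (e t)
          simp only [Set.mem_setOf_eq]
          omega
        · intro t u htu
          apply hanti
          rw [Fin.le_def, he, he]
          rw [Fin.le_def] at htu
          omega
        · intro t u hut hmem
          have hku : ((e t : Fin (WcZ c').length) : ℕ) = ((e u : Fin (WcZ c').length) : ℕ) + 1 := by
            rw [he, he]
            have h2 := u.isLt
            omega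
          apply hdesc (e u) (e t) hku
          have hn1 : ((e u : Fin (WcZ c').length) : ℕ) + 1 < (WcZ c').length := by
            rw [he]
            have h2 := u.isLt
            omega
          have hdw := desc_WcZ c' hn1
          have hval : (McL c').sum - (((e u : Fin (WcZ c').length) : ℕ) + 1) = (t : ℕ) + 1 := by
            rw [he]
            have h2 := u.isLt
            omega
          rw [List.get_eq_getElem, List.get_eq_getElem]
          simp only [hku]
          exact hdw.mpr (by rw [hval, hshift]; exact hmem)
        · rw [← hsum]
          exact Equiv.sum_comp e (fun j => Finsupp.single (g j) 1)
      · rintro ⟨hpos, hmono, hasc, hsum⟩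
        have hsum' : (∑ j, Finsupp.single (g j) 1) = m := by
          rw [← Equiv.sum_comp e (fun j => Finsupp.single (g j) 1)]
          exact hsum
        refine ⟨fun j => ?_, ?_, ?_, fun j => ?_, hsum'⟩
        · have := hpos (e.symm j)
          simp only [Set.mem_setOf_eq, Equiv.apply_symm_apply] at this
          omega
        · intro j k hjk
          have := hmono (a := e.symm k) (b := e.symm j)
            (by rw [Fin.le_def, hes, hes]; rw [Fin.le_def] at hjk; omega)
          simpa only [Equiv.apply_symm_apply] using this
        · intro j k hkj hlt
          have hn1 : (j : ℕ) + 1 < (WcZ c').length := by have := k.isLt; omega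
          have hdw := desc_WcZ c' hn1
          rw [List.get_eq_getElem, List.get_eq_getElem] at hlt
          simp only [hkj] at hlt
          have hmem := hdw.mp hlt
          have h1 : ((e.symm j : Fin _) : ℕ) = ((e.symm k : Fin _) : ℕ) + 1 := by
            simp only [hes]
            have := k.isLt
            omega
          have h2 : ((e.symm k : Fin _) : ℕ) + 1 ∈ compS (flattenC c) := by
            have hval : ((e.symm k : Fin _) : ℕ) + 1 = (McL c').sum - ((j : ℕ) + 1) := by
              simp only [hes]
              have := k.isLt
              omega
            rw [hval]
            rw [hshift] at hmem
            exact hmem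
          have := hasc (e.symm k) (e.symm j) h1 h2
          simpa only [Equiv.apply_symm_apply] using this
        · have hjmem : (ofLex ((WcZ c').get j)).1 ∈ c'.support :=
            fst_mem (List.get_mem _ _)
          rw [hsupp, Finset.mem_map] at hjmem
          obtain ⟨i, hi, hij⟩ := hjmem
          have hg : g j ∈ m.support := mem_support_of_sum_single hsum' j
          have t1 : (g j - i).toNat
              ≤ m.support.sup (fun x => c.support.sup fun i' => (x - i').toNat) :=
            le_trans (Finset.le_sup (f := fun i' => (g j - i').toNat) hi)
              (Finset.le_sup (f := fun x => c.support.sup fun i' => (x - i').toNat) hg)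
          have t2 : g j - i ≤ ((g j - i).toNat : ℤ) := Int.self_le_toNat _
          rw [← hij]
          show g j ≤ i + (b : ℤ)
          omega
    exact Nat.card_congr
      ⟨fun x => ⟨fun t => x.1 (e t), (key x.1).mp x.2⟩,
       fun y => ⟨fun j => y.1 (e.symm j), (key _).mpr (by
          simpa only [Equiv.symm_apply_apply] using y.2)⟩,
       fun x => Subtype.ext (funext fun j => by simp only [Equiv.apply_symm_apply]),
       fun y => Subtype.ext (funext fun t => by simp only [Equiv.symm_apply_apply])⟩
end

section
/- Shuffle rule for back stable slides: Let c and d be ℕ-vectors with associated injective words W_c and W_d, and let W'_d be the word obtained from W_d by replacing each letter (i,j) by (i, j + c_i). Then 𝔉⃖_c · 𝔉⃖_d = Σ_L 𝔉⃖(L), where L ranges over all interleavings of W_c and W'_d, i.e. all words of length ℓ(W_c) + ℓ(W_d) containing W_c and W'_d as complementary subsequences. -/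
/-- `Interleave A B L`: the word `L` contains `A` and `B` as complementary
subsequences. -/
inductive Interleave {α : Type*} : List α → List α → List α → Prop
  | nil : Interleave [] [] []
  | left {a : α} {A B L : List α} : Interleave A B L → Interleave (a :: A) B (a :: L)
  | right {b : α} {A B L : List α} : Interleave A B L → Interleave A (b :: B) (b :: L)

/-- The word `W'_d` obtained from `W_d` by replacing each letter `(i,j)` by
`(i, j + c_i)`. -/
noncomputable def shiftWord (c : ℤ →₀ ℕ) (W : List (ℤ ×ₗ ℕ+)) : List (ℤ ×ₗ ℕ+) :=
  W.map (fun a => toLex ((ofLex a).1,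
    ⟨((ofLex a).2 : ℕ) + c (ofLex a).1, Nat.add_pos_left (ofLex a).2.2 _⟩))


/-! ### Auxiliary development for the shuffle rule -/

section ShuffleAux

open Finset

abbrev X2 : Type := ℤ ×ₗ ℕ+
abbrev XX : Type := ℤ ×ₗ X2

/-- The solution set counted by `backSlideW`. -/
def SolType (W : List X2) (μ : ℤ →₀ ℕ) : Type :=
  {g : Fin W.length → ℤ // Antitone g ∧
    (∀ j k : Fin W.length, (k : ℕ) = (j : ℕ) + 1 → W.get k < W.get j → g k < g j) ∧
    (∀ j, g j ≤ (ofLex (W.get j)).1) ∧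
    (∑ j, Finsupp.single (g j) 1) = μ}

lemma backSlideW_eq (W : List X2) (μ : ℤ →₀ ℕ) :
    backSlideW W μ = (Nat.card (SolType W μ) : ℚ) := rfl

/-- The word of a finite subset of `XX`. -/
noncomputable def wordOf (s : Finset XX) : List X2 :=
  (s.sort (· ≤ ·)).map (fun x => (ofLex x).2)

def valOK (s : Finset XX) : Prop :=
  ∀ x ∈ s, -(ofLex x).1 ≤ (ofLex (ofLex x).2).1

noncomputable def wt (s : Finset XX) : ℤ →₀ ℕ :=
  ∑ x ∈ s, Finsupp.single (-(ofLex x).1) 1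

/-- The finset avatar of `SolType`. -/
def SFin (W : List X2) (μ : ℤ →₀ ℕ) : Type :=
  {s : Finset XX // wordOf s = W ∧ valOK s ∧ wt s = μ}

lemma fst_le_of_le {x y : XX} (h : x ≤ y) : (ofLex x).1 ≤ (ofLex y).1 := by
  rcases (Prod.Lex.le_iff (x := x) (y := y)).1 h with h' | ⟨h', _⟩
  · exact le_of_lt h'
  · exact le_of_eq h'

lemma xx_lt_iff {x y : XX} :
    x < y ↔ (ofLex x).1 < (ofLex y).1 ∨
      ((ofLex x).1 = (ofLex y).1 ∧ (ofLex x).2 < (ofLex y).2) :=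
  Prod.Lex.lt_iff (x := x) (y := y)

private lemma strictMono_of_adj {n : ℕ} {α : Type*} [Preorder α] {h : Fin n → α}
    (H : ∀ i j : Fin n, (j : ℕ) = (i : ℕ) + 1 → h i < h j) : StrictMono h := by
  intro a b hab
  obtain ⟨k, hk⟩ : ∃ k : ℕ, (b : ℕ) = (a : ℕ) + k + 1 :=
    ⟨(b : ℕ) - (a : ℕ) - 1, by omega⟩
  induction k generalizing b with
  | zero => exact H a b (by omega)
  | succ k ih =>
    have hb' : (a : ℕ) + k + 1 < n := by omega
    have h1 : a < (⟨(a : ℕ) + k + 1, hb'⟩ : Fin n) := by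
      rw [Fin.lt_def]; simp only [Fin.val_mk]; omega
    exact (ih h1 rfl).trans
      (H ⟨(a : ℕ) + k + 1, hb'⟩ b (by simp only [Fin.val_mk]; omega))

/-- The function sending a solution to its set of pairs. -/
def theFun (W : List X2) (g : Fin W.length → ℤ) : Fin W.length → XX :=
  fun j => toLex (-(g j), W.get j)

lemma theFun_strictMono {W : List X2} (hW : W.Nodup) {g : Fin W.length → ℤ}
    (hmono : Antitone g)
    (hdesc : ∀ j k : Fin W.length, (k : ℕ) = (j : ℕ) + 1 → W.get k < W.get j → g k < g j) :
    StrictMono (theFun W g) := by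
  apply strictMono_of_adj
  intro j k hjk
  have hle : g k ≤ g j := hmono (by rw [Fin.le_def]; omega)
  rcases lt_or_eq_of_le hle with hlt | heq
  · exact xx_lt_iff.2 (Or.inl (by simpa [theFun] using neg_lt_neg hlt))
  · refine xx_lt_iff.2 (Or.inr ⟨by simp [theFun, heq], ?_⟩)
    have hne : W.get j ≠ W.get k := by
      intro hEq
      exact absurd (congrArg Fin.val (List.nodup_iff_injective_get.1 hW hEq)) (by omega)
    have hnlt : ¬ W.get k < W.get j := fun hc =>
      absurd (hdesc j k hjk hc) (by rw [heq]; exact lt_irrefl _)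
    simpa [theFun] using lt_of_le_of_ne (le_of_not_gt hnlt) hne

lemma sort_map_univ {n : ℕ} (f : Fin n → XX) (hf : StrictMono f) :
    (Finset.univ.map ⟨f, hf.injective⟩).sort (· ≤ ·) = List.ofFn f := by
  refine (fun hp hs => List.Perm.eq_of_pairwise' (Finset.pairwise_sort _ _) hs hp) ?_ ?_
  · have h1 : ((Finset.univ.map ⟨f, hf.injective⟩).sort (· ≤ ·) : Multiset XX)
        = (Finset.univ.map ⟨f, hf.injective⟩).val := Finset.sort_eq _ _
    have h2 : (Finset.univ.map ⟨f, hf.injective⟩).val = Multiset.map f Finset.univ.val :=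
      Finset.map_val _ _
    rw [Fin.univ_val_map] at h2
    exact Multiset.coe_eq_coe.1 (by rw [h1, h2])
  · rw [List.pairwise_ofFn]
    exact fun i j hij => (hf hij).le

lemma word_theFun {W : List X2} (hW : W.Nodup) {g : Fin W.length → ℤ}
    (hsm : StrictMono (theFun W g)) :
    wordOf (Finset.univ.map ⟨theFun W g, hsm.injective⟩) = W := by
  rw [wordOf, sort_map_univ _ hsm, List.map_ofFn]
  have : ((fun x : XX => (ofLex x).2) ∘ theFun W g) = fun j => W.get j := rfl
  rw [this, List.ofFn_get]

lemma solToFin_aux {W : List X2} (hW : W.Nodup) {g : Fin W.length → ℤ}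
    (hmono : Antitone g)
    (hdesc : ∀ j k : Fin W.length, (k : ℕ) = (j : ℕ) + 1 → W.get k < W.get j → g k < g j)
    (hval : ∀ j, g j ≤ (ofLex (W.get j)).1) {μ : ℤ →₀ ℕ}
    (hsum : (∑ j, Finsupp.single (g j) 1) = μ) :
    wordOf (Finset.univ.map ⟨theFun W g, (theFun_strictMono hW hmono hdesc).injective⟩) = W ∧
    valOK (Finset.univ.map ⟨theFun W g, (theFun_strictMono hW hmono hdesc).injective⟩) ∧
    wt (Finset.univ.map ⟨theFun W g, (theFun_strictMono hW hmono hdesc).injective⟩) = μ := by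
  refine ⟨word_theFun hW (theFun_strictMono hW hmono hdesc), ?_, ?_⟩
  · intro x hx
    rw [Finset.mem_map] at hx
    obtain ⟨j, -, rfl⟩ := hx
    simpa [theFun] using hval j
  · rw [wt, Finset.sum_map]
    simpa [theFun] using hsum

/-- The forward map from solutions to finsets. -/
noncomputable def solToFin {W : List X2} (hW : W.Nodup) (μ : ℤ →₀ ℕ) :
    SolType W μ → SFin W μ := fun p =>
  ⟨Finset.univ.map ⟨theFun W p.1, (theFun_strictMono hW p.2.1 p.2.2.1).injective⟩,
    solToFin_aux hW p.2.1 p.2.2.1 p.2.2.2.1 p.2.2.2.2⟩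

lemma solToFin_injective {W : List X2} (hW : W.Nodup) (μ : ℤ →₀ ℕ) :
    Function.Injective (solToFin hW μ) := by
  intro p q hpq
  have hs : Finset.univ.map ⟨theFun W p.1, (theFun_strictMono hW p.2.1 p.2.2.1).injective⟩
      = Finset.univ.map ⟨theFun W q.1, (theFun_strictMono hW q.2.1 q.2.2.1).injective⟩ :=
    congrArg Subtype.val hpq
  have hof : List.ofFn (theFun W p.1) = List.ofFn (theFun W q.1) := by
    rw [← sort_map_univ _ (theFun_strictMono hW p.2.1 p.2.2.1),
      ← sort_map_univ _ (theFun_strictMono hW q.2.1 q.2.2.1), hs]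
  have hfun : theFun W p.1 = theFun W q.1 := by
    funext j
    have := List.ofFn_inj.1 hof
    exact congrFun this j
  apply Subtype.ext
  funext j
  have := congrFun hfun j
  have h1 : -(p.1 j) = -(q.1 j) := congrArg (fun x : XX => (ofLex x).1) this
  omega

lemma solToFin_surjective {W : List X2} (hW : W.Nodup) (μ : ℤ →₀ ℕ) :
    Function.Surjective (solToFin hW μ) := by
  rintro ⟨s, hw, hv, hμ⟩
  set l : List XX := s.sort (· ≤ ·) with hl
  have hlen : W.length = l.length := by
    rw [← hw, wordOf, List.length_map]
  set g : Fin W.length → ℤ := fun j => -(ofLex (l.get (Fin.cast hlen j))).1 with hg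
  have hget : ∀ j : Fin W.length, W.get j = (ofLex (l.get (Fin.cast hlen j))).2 := by
    intro j
    rw [List.get_eq_getElem, List.getElem_of_eq hw.symm j.2]
    simp [wordOf, List.get_eq_getElem, hl]
  have hmem : ∀ j : Fin W.length, l.get (Fin.cast hlen j) ∈ s := by
    intro j
    have : l.get (Fin.cast hlen j) ∈ l := List.get_mem l _
    exact (Finset.mem_sort _).1 this
  have hsorted : List.Pairwise (· ≤ ·) l := Finset.pairwise_sort _ _
  have hslt : List.Pairwise (· < ·) l := (Finset.sortedLT_sort s).pairwise
  have hmono : Antitone g := by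
    intro a b hab
    have : l.get (Fin.cast hlen a) ≤ l.get (Fin.cast hlen b) :=
      hsorted.rel_get_of_le (by simp only [Fin.le_def, Fin.coe_cast]; exact hab)
    have := fst_le_of_le this
    simp only [hg]
    omega
  have hdesc : ∀ j k : Fin W.length, (k : ℕ) = (j : ℕ) + 1 → W.get k < W.get j →
      g k < g j := by
    intro j k hjk hWlt
    have hlt : l.get (Fin.cast hlen j) < l.get (Fin.cast hlen k) :=
      hslt.rel_get_of_lt (by simp only [Fin.lt_def, Fin.coe_cast]; omega)
    rcases xx_lt_iff.1 hlt with h1 | ⟨h1, h2⟩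
    · simp only [hg]; omega
    · rw [hget j, hget k] at hWlt
      exact absurd hWlt (asymm h2)
  have hval : ∀ j, g j ≤ (ofLex (W.get j)).1 := by
    intro j
    have := hv _ (hmem j)
    rw [hget j]
    simpa [hg] using this
  have hsum : (∑ j, Finsupp.single (g j) 1) = μ := by
    rw [← hμ, wt]
    have h1 : (∑ j : Fin W.length, Finsupp.single (g j) 1)
        = ∑ j : Fin l.length, Finsupp.single (-(ofLex (l.get j)).1) (1 : ℕ) := by
      apply Fintype.sum_equiv (finCongr hlen)
      intro j
      rfl
    rw [h1]
    have h2 : (∑ j : Fin l.length, Finsupp.single (-(ofLex (l.get j)).1) (1 : ℕ))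
        = (l.map (fun x => Finsupp.single (-(ofLex x).1) (1 : ℕ))).sum := by
      rw [← Fin.sum_univ_fun_getElem l (fun x => Finsupp.single (-(ofLex x).1) (1 : ℕ))]
      rfl
    rw [h2]
    have h3 : List.Perm l s.toList := Finset.sort_perm_toList _ _
    rw [List.Perm.sum_eq (h3.map (fun x => Finsupp.single (-(ofLex x).1) (1 : ℕ)))]
    exact Finset.sum_map_toList s _
  refine ⟨⟨g, hmono, hdesc, hval, hsum⟩, ?_⟩
  apply Subtype.ext
  show Finset.univ.map ⟨theFun W g, _⟩ = s
  have hofn : List.ofFn (theFun W g) = l := by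
    apply List.ext_get
    · rw [List.length_ofFn, hlen]
    · intro n h1 h2
      rw [List.get_ofFn]
      show theFun W g (Fin.cast List.length_ofFn ⟨n, h1⟩) = _
      have : theFun W g (Fin.cast List.length_ofFn ⟨n, h1⟩)
          = toLex (-(g (Fin.cast List.length_ofFn ⟨n, h1⟩)),
              W.get (Fin.cast List.length_ofFn ⟨n, h1⟩)) := rfl
      rw [this, hget]
      simp only [hg, neg_neg]
      rfl
  have hsm := theFun_strictMono hW hmono hdesc
  have : (Finset.univ.map ⟨theFun W g, hsm.injective⟩).sort (· ≤ ·) = s.sort (· ≤ ·) := by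
    rw [sort_map_univ _ hsm, hofn]
  calc Finset.univ.map ⟨theFun W g, hsm.injective⟩
      = ((Finset.univ.map ⟨theFun W g, hsm.injective⟩).sort (· ≤ ·)).toFinset := by
        rw [Finset.sort_toFinset]
    _ = s := by rw [this, Finset.sort_toFinset]

lemma card_sol_eq_card_sfin {W : List X2} (hW : W.Nodup) (μ : ℤ →₀ ℕ) :
    Nat.card (SolType W μ) = Nat.card (SFin W μ) :=
  Nat.card_congr (Equiv.ofBijective _ ⟨solToFin_injective hW μ, solToFin_surjective hW μ⟩)

lemma mem_word_of_mem {s : Finset XX} {x : XX} (hx : x ∈ s) : (ofLex x).2 ∈ wordOf s :=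
  List.mem_map_of_mem ((Finset.mem_sort _).2 hx)

instance sfin_finite (W : List X2) (μ : ℤ →₀ ℕ) : Finite (SFin W μ) := by
  classical
  set U : Finset XX :=
    ((μ.support.image (fun i => -i)) ×ˢ W.toFinset).map (Equiv.toEmbedding toLex) with hU
  have hsub : ∀ s : Finset XX, wordOf s = W → wt s = μ → s ∈ U.powerset := by
    intro s hw hμ
    rw [Finset.mem_powerset]
    intro x hx
    rw [hU, Finset.mem_map]
    refine ⟨((ofLex x).1, (ofLex x).2), ?_, rfl⟩
    rw [Finset.mem_product]
    constructor
    · rw [Finset.mem_image]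
      refine ⟨-(ofLex x).1, ?_, by ring⟩
      rw [Finsupp.mem_support_iff, ← hμ]
      have h1 : (1 : ℕ) ≤ (wt s) (-(ofLex x).1) := by
        rw [wt, Finsupp.finset_sum_apply]
        have := Finset.single_le_sum
          (f := fun y => (Finsupp.single (-(ofLex y).1) (1 : ℕ)) (-(ofLex x).1))
          (fun y _ => Nat.zero_le _) hx
        simpa using this
      omega
    · rw [List.mem_toFinset, ← hw]
      exact mem_word_of_mem hx
  have : Function.Injective (fun p : SFin W μ => (⟨p.1, hsub p.1 p.2.1 p.2.2.2⟩ : ↥U.powerset)) := by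
    intro p q h
    simp only [Subtype.mk.injEq] at h
    exact Subtype.ext h
  exact Finite.of_injective _ this

lemma sort_filter (s : Finset XX) (q : XX → Bool) :
    (s.filter (fun x => q x)).sort (· ≤ ·) = (s.sort (· ≤ ·)).filter q := by
  refine (fun hp => List.Perm.eq_of_pairwise' (Finset.pairwise_sort _ _)
    (List.Pairwise.sublist List.filter_sublist (Finset.pairwise_sort _ _)) hp) ?_
  have h1 : ((s.filter (fun x => q x)).sort (· ≤ ·) : Multiset XX)
      = (s.filter (fun x => q x)).val := Finset.sort_eq _ _
  have h2 : (s.filter (fun x => q x)).val = Multiset.filter (fun x => q x) s.val :=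
    Finset.filter_val _ _
  have h3 : (s.sort (· ≤ ·) : Multiset XX) = s.val := Finset.sort_eq _ _
  apply Multiset.coe_eq_coe.1
  rw [h1, h2, ← h3]
  have h4 : (s.sort (· ≤ ·)).filter (fun x => decide (q x = true))
      = (s.sort (· ≤ ·)).filter q :=
    List.filter_congr (fun x _ => by simp)
  rw [Multiset.filter_coe, h4]
lemma word_filter (s : Finset XX) (q : X2 → Bool) :
    wordOf (s.filter (fun x => q (ofLex x).2)) = (wordOf s).filter q := by
  rw [wordOf, wordOf, sort_filter s (fun x => q (ofLex x).2)]
  rw [List.filter_map]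
  rfl

lemma interleave_perm {α : Type*} {A B L : List α} (h : Interleave A B L) :
    List.Perm L (A ++ B) := by
  induction h with
  | nil => exact List.Perm.refl _
  | left _ ih => exact ih.cons _
  | right _ ih => exact ((ih.cons _).trans List.perm_middle.symm)

lemma interleave_filter {α : Type*} {p : α → Bool} {A B L : List α} (h : Interleave A B L)
    (hA : ∀ a ∈ A, p a = true) (hB : ∀ b ∈ B, p b = false) :
    L.filter p = A ∧ L.filter (fun x => !p x) = B := by
  induction h with
  | nil => simp
  | @left a A' B' L' h ih =>
    have hpa : p a = true := hA a List.mem_cons_self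
    obtain ⟨ih1, ih2⟩ := ih (fun x hx => hA x (List.mem_cons_of_mem _ hx)) hB
    constructor
    · rw [List.filter_cons_of_pos hpa, ih1]
    · rw [List.filter_cons_of_neg (by simp [hpa]), ih2]
  | @right b A' B' L' h ih =>
    have hpb : p b = false := hB b List.mem_cons_self
    obtain ⟨ih1, ih2⟩ := ih hA (fun x hx => hB x (List.mem_cons_of_mem _ hx))
    constructor
    · rw [List.filter_cons_of_neg (by simp [hpb]), ih1]
    · rw [List.filter_cons_of_pos (by simp [hpb]), ih2]

lemma interleave_of_filter {α : Type*} {p : α → Bool} : ∀ {L A B : List α},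
    L.filter p = A → L.filter (fun x => !p x) = B → Interleave A B L := by
  intro L
  induction L with
  | nil =>
    intro A B h1 h2
    simp only [List.filter_nil] at h1 h2
    rw [← h1, ← h2]
    exact Interleave.nil
  | cons x L ih =>
    intro A B h1 h2
    by_cases hx : p x = true
    · rw [List.filter_cons_of_pos hx] at h1
      rw [List.filter_cons_of_neg (by simp [hx])] at h2
      rw [← h1]
      exact Interleave.left (ih rfl h2)
    · have hx' : p x = false := by simp at hx; exact hx
      rw [List.filter_cons_of_neg (by simp [hx'])] at h1
      rw [List.filter_cons_of_pos (by simp [hx'])] at h2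
      rw [← h2]
      exact Interleave.right (ih h1 rfl)

section Central

variable {A B : List X2} (hdisj : ∀ x ∈ A, x ∈ B → False) (m : ℤ →₀ ℕ)

/-- Pairs of finsets realizing `A` and `B` with total weight `m`. -/
def PairType (A B : List X2) (m : ℤ →₀ ℕ) : Type :=
  {q : Finset XX × Finset XX // wordOf q.1 = A ∧ wordOf q.2 = B ∧ valOK q.1 ∧ valOK q.2 ∧
    wt q.1 + wt q.2 = m}

/-- Finsets realizing an interleaving of `A` and `B` with weight `m`. -/
def TType (A B : List X2) (m : ℤ →₀ ℕ) : Type :=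
  {s : Finset XX // Interleave A B (wordOf s) ∧ valOK s ∧ wt s = m}

end Central

noncomputable def pa (A : List X2) : X2 → Bool := fun y => decide (y ∈ A)

lemma filter_union_left {A B : List X2} {s1 s2 : Finset XX} (h1 : wordOf s1 = A)
    (h2 : wordOf s2 = B) (hdisj : ∀ x ∈ A, x ∈ B → False) :
    (s1 ∪ s2).filter (fun x => pa A (ofLex x).2) = s1 := by
  ext x
  simp only [Finset.mem_filter, Finset.mem_union, pa, decide_eq_true_eq]
  constructor
  · rintro ⟨hx | hx, hmem⟩
    · exact hx
    · exact (hdisj _ hmem (h2 ▸ mem_word_of_mem hx)).elim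
  · intro hx
    exact ⟨Or.inl hx, h1 ▸ mem_word_of_mem hx⟩

lemma filter_union_right {A B : List X2} {s1 s2 : Finset XX} (h1 : wordOf s1 = A)
    (h2 : wordOf s2 = B) (hdisj : ∀ x ∈ A, x ∈ B → False) :
    (s1 ∪ s2).filter (fun x => !pa A (ofLex x).2) = s2 := by
  ext x
  simp only [Finset.mem_filter, Finset.mem_union, pa, Bool.not_eq_true', decide_eq_false_iff_not]
  constructor
  · rintro ⟨hx | hx, hmem⟩
    · exact (hmem (h1 ▸ mem_word_of_mem hx)).elim
    · exact hx
  · intro hx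
    exact ⟨Or.inr hx, fun hmem => hdisj _ hmem (h2 ▸ mem_word_of_mem hx)⟩

lemma filter_not_eq {A : List X2} (s : Finset XX) :
    s.filter (fun x => !pa A (ofLex x).2) = s.filter (fun x => ¬ (pa A (ofLex x).2 = true)) :=
  Finset.filter_congr (fun x _ => by simp)

/-- The central merge bijection. -/
noncomputable def centralEquiv (A B : List X2) (hdisj : ∀ x ∈ A, x ∈ B → False) (m : ℤ →₀ ℕ) :
    PairType A B m ≃ TType A B m where
  toFun q :=
    ⟨q.1.1 ∪ q.1.2, by
      obtain ⟨⟨s1, s2⟩, h1, h2, h3, h4, h5⟩ := q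
      have hdis : Disjoint s1 s2 := Finset.disjoint_left.mpr
        (fun x hx1 hx2 => hdisj _ (h1 ▸ mem_word_of_mem hx1) (h2 ▸ mem_word_of_mem hx2))
      refine ⟨?_, ?_, ?_⟩
      · apply interleave_of_filter (p := pa A)
        · rw [← word_filter, filter_union_left h1 h2 hdisj, h1]
        · rw [← word_filter, filter_union_right h1 h2 hdisj, h2]
      · intro x hx
        rcases Finset.mem_union.1 hx with hx | hx
        · exact h3 x hx
        · exact h4 x hx
      · show wt (s1 ∪ s2) = m
        rw [wt, Finset.sum_union hdis]
        exact h5⟩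
  invFun s :=
    ⟨(s.1.filter (fun x => pa A (ofLex x).2), s.1.filter (fun x => !pa A (ofLex x).2)), by
      obtain ⟨s, hI, hv, hw⟩ := s
      obtain ⟨hfA, hfB⟩ := interleave_filter (p := pa A) hI (fun a ha => decide_eq_true ha)
        (fun b hb => decide_eq_false (fun hbA => hdisj _ hbA hb))
      refine ⟨?_, ?_, ?_, ?_, ?_⟩
      · show wordOf (s.filter (fun x => pa A (ofLex x).2)) = A
        rw [word_filter, hfA]
      · show wordOf (s.filter (fun x => !pa A (ofLex x).2)) = B
        rw [word_filter s (fun y => !pa A y), hfB]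
      · intro x hx
        exact hv x (Finset.mem_filter.1 hx).1
      · intro x hx
        exact hv x (Finset.mem_filter.1 hx).1
      · show wt (s.filter (fun x => pa A (ofLex x).2))
            + wt (s.filter (fun x => !pa A (ofLex x).2)) = m
        rw [← hw, wt, wt, wt, filter_not_eq]
        exact Finset.sum_filter_add_sum_filter_not s _ _⟩
  left_inv q := by
    obtain ⟨⟨s1, s2⟩, h1, h2, h3, h4, h5⟩ := q
    apply Subtype.ext
    exact Prod.ext (filter_union_left h1 h2 hdisj) (filter_union_right h1 h2 hdisj)
  right_inv s := by
    obtain ⟨s, hI, hv, hw⟩ := s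
    apply Subtype.ext
    show s.filter _ ∪ s.filter _ = s
    rw [filter_not_eq]
    exact Finset.filter_union_filter_not_eq (p := _) (s := s)

/-- Splitting pairs by the weight of the first component. -/
noncomputable def equivPair (A B : List X2) (m : ℤ →₀ ℕ) :
    PairType A B m ≃
      Σ p : {p : (ℤ →₀ ℕ) × (ℤ →₀ ℕ) // p ∈ Finset.HasAntidiagonal.antidiagonal m},
        SFin A p.1.1 × SFin B p.1.2 where
  toFun q :=
    ⟨⟨(wt q.1.1, wt q.1.2), Finset.HasAntidiagonal.mem_antidiagonal.2 q.2.2.2.2.2⟩,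
      ⟨q.1.1, q.2.1, q.2.2.2.1, rfl⟩, ⟨q.1.2, q.2.2.1, q.2.2.2.2.1, rfl⟩⟩
  invFun x :=
    ⟨(x.2.1.1, x.2.2.1), x.2.1.2.1, x.2.2.2.1, x.2.1.2.2.1, x.2.2.2.2.1, by
      rw [x.2.1.2.2.2, x.2.2.2.2.2]
      exact Finset.HasAntidiagonal.mem_antidiagonal.1 x.1.2⟩
  left_inv q := rfl
  right_inv x := by
    rcases x with ⟨⟨⟨m1, m2⟩, hp⟩, ⟨⟨s1, h1, hv1, hw1⟩, ⟨s2, h2, hv2, hw2⟩⟩⟩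
    obtain rfl : m1 = wt s1 := hw1.symm
    obtain rfl : m2 = wt s2 := hw2.symm
    rfl

/-- Splitting merged solutions according to their word. -/
noncomputable def equivT (A B : List X2) (m : ℤ →₀ ℕ) (T : Finset (List X2))
    (hT : ∀ L, L ∈ T ↔ Interleave A B L) :
    TType A B m ≃ Σ L : {L // L ∈ T}, SFin L.1 m where
  toFun s := ⟨⟨wordOf s.1, (hT _).2 s.2.1⟩, ⟨s.1, rfl, s.2.2.1, s.2.2.2⟩⟩
  invFun x := ⟨x.2.1, by rw [x.2.2.1]; exact (hT _).1 x.1.2, x.2.2.2.1, x.2.2.2.2⟩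
  left_inv s := rfl
  right_inv x := by
    rcases x with ⟨⟨L, hL⟩, ⟨s, h1, hv, hw⟩⟩
    obtain rfl : L = wordOf s := h1.symm
    rfl

private lemma nat_card_sigma {ι : Type*} [Fintype ι] (f : ι → Type*) [∀ i, Finite (f i)] :
    Nat.card (Σ i, f i) = ∑ i, Nat.card (f i) := by
  letI : ∀ i, Fintype (f i) := fun i => Fintype.ofFinite _
  simp [Nat.card_eq_fintype_card, Fintype.card_sigma]

lemma key_count (A B : List X2) (hA : A.Nodup) (hB : B.Nodup)
    (hdisj : ∀ x ∈ A, x ∈ B → False) (m : ℤ →₀ ℕ) (T : Finset (List X2))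
    (hT : ∀ L, L ∈ T ↔ Interleave A B L) :
    ∑ p ∈ Finset.HasAntidiagonal.antidiagonal m, Nat.card (SolType A p.1) * Nat.card (SolType B p.2)
      = ∑ L ∈ T, Nat.card (SolType L m) := by
  classical
  have hnodup : ∀ L ∈ T, L.Nodup := fun L hL =>
    ((interleave_perm ((hT L).1 hL)).nodup_iff).2
      (hA.append hB (fun x hx hx' => hdisj x hx hx'))
  calc ∑ p ∈ Finset.HasAntidiagonal.antidiagonal m, Nat.card (SolType A p.1) * Nat.card (SolType B p.2)
      = ∑ p ∈ Finset.HasAntidiagonal.antidiagonal m, Nat.card (SFin A p.1) * Nat.card (SFin B p.2) :=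
        Finset.sum_congr rfl (fun p _ => by
          rw [card_sol_eq_card_sfin hA, card_sol_eq_card_sfin hB])
    _ = ∑ p : {p : (ℤ →₀ ℕ) × (ℤ →₀ ℕ) // p ∈ Finset.HasAntidiagonal.antidiagonal m},
          Nat.card (SFin A p.1.1) * Nat.card (SFin B p.1.2) :=
        (Finset.sum_coe_sort _ _).symm
    _ = ∑ p : {p : (ℤ →₀ ℕ) × (ℤ →₀ ℕ) // p ∈ Finset.HasAntidiagonal.antidiagonal m},
          Nat.card (SFin A p.1.1 × SFin B p.1.2) :=
        Finset.sum_congr rfl (fun p _ => (Nat.card_prod _ _).symm)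
    _ = Nat.card (Σ p : {p : (ℤ →₀ ℕ) × (ℤ →₀ ℕ) // p ∈ Finset.HasAntidiagonal.antidiagonal m},
          SFin A p.1.1 × SFin B p.1.2) := (nat_card_sigma _).symm
    _ = Nat.card (PairType A B m) := (Nat.card_congr (equivPair A B m)).symm
    _ = Nat.card (TType A B m) := Nat.card_congr (centralEquiv A B hdisj m)
    _ = Nat.card (Σ L : {L // L ∈ T}, SFin L.1 m) := Nat.card_congr (equivT A B m T hT)
    _ = ∑ L : {L // L ∈ T}, Nat.card (SFin L.1 m) := nat_card_sigma _
    _ = ∑ L ∈ T, Nat.card (SFin L m) := Finset.sum_coe_sort T (fun L => Nat.card (SFin L m))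
    _ = ∑ L ∈ T, Nat.card (SolType L m) :=
        Finset.sum_congr rfl (fun L hL => (card_sol_eq_card_sfin (hnodup L hL) m).symm)

/-! ### Facts about `WcZ` and `shiftWord` -/

lemma mem_WcZ_snd_le (c : ℤ →₀ ℕ) {x : X2} (hx : x ∈ WcZ c) :
    ((ofLex x).2 : ℕ) ≤ c (ofLex x).1 := by
  rw [WcZ, List.mem_flatten] at hx
  obtain ⟨l, hl, hxl⟩ := hx
  rw [List.mem_map] at hl
  obtain ⟨i, hi, rfl⟩ := hl
  rw [List.mem_map] at hxl
  obtain ⟨j, hj, rfl⟩ := hxl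
  rw [List.mem_range] at hj
  simpa [Nat.succPNat_coe] using Nat.succ_le_of_lt hj

lemma nodup_WcZ (c : ℤ →₀ ℕ) : (WcZ c).Nodup := by
  rw [WcZ, List.nodup_flatten]
  constructor
  · intro l hl
    rw [List.mem_map] at hl
    obtain ⟨i, hi, rfl⟩ := hl
    refine List.Nodup.map ?_ List.nodup_range
    intro a b hab
    have := congrArg (fun x : X2 => ((ofLex x).2 : ℕ)) hab
    simpa [Nat.succPNat_coe] using this
  · have hnd : ((c.support.sort (· ≤ ·)).reverse).Nodup :=
      List.nodup_reverse.2 (Finset.sort_nodup _ _)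
    rw [List.pairwise_map]
    refine List.Pairwise.imp ?_ hnd
    intro i i' hne x hx hx'
    rw [List.mem_map] at hx hx'
    obtain ⟨j, hj, rfl⟩ := hx
    obtain ⟨j', hj', hEq⟩ := hx'
    exact hne (congrArg (fun x : X2 => (ofLex x).1) hEq).symm

private def fshift (c : ℤ →₀ ℕ) : X2 → X2 := fun a =>
  toLex ((ofLex a).1, ⟨((ofLex a).2 : ℕ) + c (ofLex a).1, Nat.add_pos_left (ofLex a).2.2 _⟩)

lemma shiftWord_eq (c : ℤ →₀ ℕ) (W : List X2) : shiftWord c W = W.map (fshift c) := rfl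

lemma fshift_lt (c : ℤ →₀ ℕ) {a b : X2} : fshift c a < fshift c b ↔ a < b := by
  constructor
  · intro h
    rcases Prod.Lex.lt_iff.1 h with h1 | ⟨h1, h2⟩
    · exact Prod.Lex.lt_iff.2 (Or.inl h1)
    · refine Prod.Lex.lt_iff.2 (Or.inr ⟨h1, ?_⟩)
      have h1' : (ofLex a).1 = (ofLex b).1 := h1
      have h2' : ((ofLex a).2 : ℕ) + c (ofLex a).1 < ((ofLex b).2 : ℕ) + c (ofLex b).1 := h2
      rw [h1'] at h2'
      show (ofLex a).2 < (ofLex b).2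
      exact (PNat.coe_lt_coe _ _).1 (by omega)
  · intro h
    rcases Prod.Lex.lt_iff.1 h with h1 | ⟨h1, h2⟩
    · exact Prod.Lex.lt_iff.2 (Or.inl h1)
    · refine Prod.Lex.lt_iff.2 (Or.inr ⟨h1, ?_⟩)
      have h1' : (ofLex a).1 = (ofLex b).1 := h1
      have h2' : ((ofLex a).2 : ℕ) < ((ofLex b).2 : ℕ) := (PNat.coe_lt_coe _ _).2 h2
      show (⟨((ofLex a).2 : ℕ) + c (ofLex a).1, _⟩ : ℕ+) < ⟨((ofLex b).2 : ℕ) + c (ofLex b).1, _⟩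
      show ((ofLex a).2 : ℕ) + c (ofLex a).1 < ((ofLex b).2 : ℕ) + c (ofLex b).1
      rw [h1']
      omega

lemma shift_injective (c : ℤ →₀ ℕ) : Function.Injective (fshift c) := by
  intro a b h
  have h1'' := congrArg (fun z : X2 => (ofLex z).1) h
  have h2'' := congrArg (fun z : X2 => ((ofLex z).2 : ℕ)) h
  have h1 : (ofLex a).1 = (ofLex b).1 := h1''
  have h2 : ((ofLex a).2 : ℕ) + c (ofLex a).1 = ((ofLex b).2 : ℕ) + c (ofLex b).1 := h2''
  rw [h1] at h2
  have h3 : (ofLex a).2 = (ofLex b).2 := PNat.coe_injective (by omega)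
  have : ofLex a = ofLex b := Prod.ext h1 h3
  exact ofLex.injective this

lemma disj_WcZ_shift (c d : ℤ →₀ ℕ) :
    ∀ x ∈ WcZ c, x ∈ shiftWord c (WcZ d) → False := by
  intro x hx1 hx2
  have h1 := mem_WcZ_snd_le c hx1
  rw [shiftWord_eq, List.mem_map] at hx2
  obtain ⟨y, hy, rfl⟩ := hx2
  have h1' : ((ofLex y).2 : ℕ) + c (ofLex y).1 ≤ c (ofLex y).1 := h1
  have h2' : 0 < ((ofLex y).2 : ℕ) := (ofLex y).2.2
  omega

/-- Shift invariance of the solution count. -/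
noncomputable def solShiftEquiv (c : ℤ →₀ ℕ) (W : List X2) (μ : ℤ →₀ ℕ) :
    SolType W μ ≃ SolType (shiftWord c W) μ := by
  have hlen : (shiftWord c W).length = W.length := by
    rw [shiftWord_eq]; exact List.length_map _
  have hcc : ∀ j : Fin W.length, Fin.cast hlen (Fin.cast hlen.symm j) = j :=
    fun j => Fin.ext rfl
  have hcc' : ∀ j : Fin (shiftWord c W).length, Fin.cast hlen.symm (Fin.cast hlen j) = j :=
    fun j => Fin.ext rfl
  have hget : ∀ j : Fin (shiftWord c W).length,
      (shiftWord c W).get j = fshift c (W.get (Fin.cast hlen j)) := by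
    intro j
    rw [List.get_eq_getElem, List.get_eq_getElem]
    exact List.getElem_map _
  refine
    { toFun := fun p => ⟨fun j => p.1 (Fin.cast hlen j), ?_, ?_, ?_, ?_⟩
      invFun := fun p => ⟨fun j => p.1 (Fin.cast hlen.symm j), ?_, ?_, ?_, ?_⟩
      left_inv := fun p => Subtype.ext rfl
      right_inv := fun p => Subtype.ext rfl }
  · intro a b hab
    exact p.2.1 (show Fin.cast hlen a ≤ Fin.cast hlen b from hab)
  · intro j k hjk hlt
    rw [hget j, hget k] at hlt
    exact p.2.2.1 _ _ hjk ((fshift_lt c).1 hlt)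
  · intro j
    rw [hget j]
    exact p.2.2.2.1 (Fin.cast hlen j)
  · exact (Fintype.sum_equiv (finCongr hlen)
      (fun j => Finsupp.single (p.1 (Fin.cast hlen j)) 1)
      (fun j => Finsupp.single (p.1 j) 1) (fun j => rfl)).trans p.2.2.2.2
  · intro a b hab
    exact p.2.1 (show Fin.cast hlen.symm a ≤ Fin.cast hlen.symm b from hab)
  · intro j k hjk hlt
    have hlt' : (shiftWord c W).get (Fin.cast hlen.symm k)
        < (shiftWord c W).get (Fin.cast hlen.symm j) := by
      rw [hget, hget]
      exact (fshift_lt c).2 hlt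
    exact p.2.2.1 _ _ hjk hlt'
  · intro j
    have := p.2.2.2.1 (Fin.cast hlen.symm j)
    rw [hget] at this
    exact this
  · exact (Fintype.sum_equiv (finCongr hlen.symm)
      (fun j => Finsupp.single (p.1 (Fin.cast hlen.symm j)) 1)
      (fun j => Finsupp.single (p.1 j) 1) (fun j => rfl)).trans p.2.2.2.2

lemma card_sol_shift (c : ℤ →₀ ℕ) (W : List X2) (μ : ℤ →₀ ℕ) :
    Nat.card (SolType (shiftWord c W) μ) = Nat.card (SolType W μ) :=
  (Nat.card_congr (solShiftEquiv c W μ)).symm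






/-- **Shuffle rule for back stable slides**: `𝔉⃖_c · 𝔉⃖_d = ∑_L 𝔉⃖(L)`, the sum over
all interleavings `L` of `W_c` and `W'_d`, where `W'_d` is `W_d` with each letter `(i,j)`
replaced by `(i, j + c_i)`. -/
theorem backSlide_shuffle (c d : ℤ →₀ ℕ) :
    backSlideC c * backSlideC d =
      ∑ᶠ L ∈ {L : List (ℤ ×ₗ ℕ+) | Interleave (WcZ c) (shiftWord c (WcZ d)) L},
        backSlideW L := by
  classical
  have hA : (WcZ c).Nodup := nodup_WcZ c
  have hB : (shiftWord c (WcZ d)).Nodup := by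
    rw [shiftWord_eq]
    exact (nodup_WcZ d).map (shift_injective c)
  have hdisj : ∀ x ∈ WcZ c, x ∈ shiftWord c (WcZ d) → False := disj_WcZ_shift c d
  have hfin : {L : List (ℤ ×ₗ ℕ+) | Interleave (WcZ c) (shiftWord c (WcZ d)) L}.Finite := by
    apply Set.Finite.subset (List.finite_toSet ((WcZ c ++ shiftWord c (WcZ d)).permutations))
    intro L hL
    exact List.mem_permutations.2 (interleave_perm hL)
  rw [finsum_mem_eq_finite_toFinset_sum _ hfin]
  apply MvPowerSeries.ext
  intro m
  rw [MvPowerSeries.coeff_mul, map_sum]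
  have hc : ∀ (W : List X2) (μ : ℤ →₀ ℕ),
      (MvPowerSeries.coeff μ) (backSlideW W) = (Nat.card (SolType W μ) : ℚ) :=
    fun _ _ => rfl
  calc ∑ p ∈ Finset.HasAntidiagonal.antidiagonal m,
        (MvPowerSeries.coeff p.1) (backSlideC c) * (MvPowerSeries.coeff p.2) (backSlideC d)
      = ∑ p ∈ Finset.HasAntidiagonal.antidiagonal m, (Nat.card (SolType (WcZ c) p.1) : ℚ)
          * (Nat.card (SolType (shiftWord c (WcZ d)) p.2) : ℚ) := by
        refine Finset.sum_congr rfl (fun p _ => ?_)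
        rw [show backSlideC c = backSlideW (WcZ c) from rfl,
          show backSlideC d = backSlideW (WcZ d) from rfl, hc, hc,
          card_sol_shift c (WcZ d) p.2]
    _ = ((∑ p ∈ Finset.HasAntidiagonal.antidiagonal m, Nat.card (SolType (WcZ c) p.1)
          * Nat.card (SolType (shiftWord c (WcZ d)) p.2) : ℕ) : ℚ) := by
        push_cast
        rfl
    _ = ((∑ L ∈ hfin.toFinset, Nat.card (SolType L m) : ℕ) : ℚ) := by
        rw [key_count (WcZ c) (shiftWord c (WcZ d)) hA hB hdisj m hfin.toFinset
          (fun L => hfin.mem_toFinset)]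
    _ = ∑ L ∈ hfin.toFinset, (MvPowerSeries.coeff m) (backSlideW L) := by
        push_cast
        exact Finset.sum_congr rfl (fun L _ => (hc L m).symm)
end ShuffleAux
end

section
/- For every m ≥ 1, the relation ≤_m is a partial order on 𝒫_m, and the poset (𝒫_m, ≤_m) is a lattice: any two elements have a least upper bound and a greatest lower bound. -/
/-- `𝒫_m`: weakly decreasing sequences `(C₁, …, C_m)` of integers. -/
def Pm (m : ℕ) : Type := {C : Fin m → ℤ // Antitone C}

/-- The order `D ≤_m C` on `𝒫_m`: `D_i ≤ C_i` for all `i`, and `D_i > D_{i+1}`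
whenever `C_i > C_{i+1}`. -/
def relm {m : ℕ} (D C : Pm m) : Prop :=
  (∀ i, D.1 i ≤ C.1 i) ∧
  ∀ i j : Fin m, (j : ℕ) = (i : ℕ) + 1 → C.1 j < C.1 i → D.1 j < D.1 i

/-- Auxiliary: the join of two antitone sequences on `ℕ`. -/
def joinSeq (c d : ℕ → ℤ) : ℕ → ℤ
  | 0 => max (c 0) (d 0)
  | n+1 => if c (n+1) < c n ∧ d (n+1) < d n then max (c (n+1)) (d (n+1))
           else joinSeq c d n

/-- Auxiliary: the meet of two antitone sequences on `ℕ`. -/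
def meetSeq (c d : ℕ → ℤ) : ℕ → ℤ
  | 0 => min (c 0) (d 0)
  | n+1 => min (min (c (n+1)) (d (n+1)))
      (meetSeq c d n - if c (n+1) < c n ∨ d (n+1) < d n then 1 else 0)

lemma max_le_joinSeq (c d : ℕ → ℤ) (hc : ∀ n, c (n+1) ≤ c n)
    (hd : ∀ n, d (n+1) ≤ d n) : ∀ n, max (c n) (d n) ≤ joinSeq c d n := by
  intro n
  induction n with
  | zero => simp [joinSeq]
  | succ n ih =>
      by_cases h : c (n+1) < c n ∧ d (n+1) < d n
      · simp [joinSeq, h]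
      · simp only [joinSeq, if_neg h]
        exact le_trans (max_le_max (hc n) (hd n)) ih

lemma joinSeq_succ_le (c d : ℕ → ℤ) (hc : ∀ n, c (n+1) ≤ c n)
    (hd : ∀ n, d (n+1) ≤ d n) (n : ℕ) : joinSeq c d (n+1) ≤ joinSeq c d n := by
  by_cases h : c (n+1) < c n ∧ d (n+1) < d n
  · simp only [joinSeq, if_pos h]
    exact le_trans (max_le_max (hc n) (hd n)) (max_le_joinSeq c d hc hd n)
  · simp [joinSeq, if_neg h]

lemma joinSeq_strict (c d : ℕ → ℤ) (n : ℕ)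
    (h : joinSeq c d (n+1) < joinSeq c d n) :
    c (n+1) < c n ∧ d (n+1) < d n := by
  by_contra hcon
  simp only [joinSeq, if_neg hcon] at h
  exact lt_irrefl _ h

lemma joinSeq_strict' (c d : ℕ → ℤ) (hc : ∀ n, c (n+1) ≤ c n)
    (hd : ∀ n, d (n+1) ≤ d n) (n : ℕ)
    (h : c (n+1) < c n ∧ d (n+1) < d n) :
    joinSeq c d (n+1) < joinSeq c d n := by
  simp only [joinSeq, if_pos h]
  have h1 : max (c (n+1)) (d (n+1)) < max (c n) (d n) :=
    max_lt (lt_of_lt_of_le h.1 (le_max_left _ _))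
      (lt_of_lt_of_le h.2 (le_max_right _ _))
  exact lt_of_lt_of_le h1 (max_le_joinSeq c d hc hd n)

lemma joinSeq_le (c d g : ℕ → ℤ)
    (hg1 : ∀ n, max (c n) (d n) ≤ g n)
    (hg2 : ∀ n, g (n+1) < g n → c (n+1) < c n ∧ d (n+1) < d n)
    (hg3 : ∀ n, g (n+1) ≤ g n) : ∀ n, joinSeq c d n ≤ g n := by
  intro n
  induction n with
  | zero => simpa [joinSeq] using hg1 0
  | succ n ih =>
      by_cases h : c (n+1) < c n ∧ d (n+1) < d n
      · simp only [joinSeq, if_pos h]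
        exact hg1 (n+1)
      · simp only [joinSeq, if_neg h]
        have heq : g (n+1) = g n := by
          rcases lt_or_eq_of_le (hg3 n) with hlt | heq
          · exact absurd (hg2 n hlt) h
          · exact heq
        rw [← heq] at ih
        exact ih

lemma meetSeq_le_min (c d : ℕ → ℤ) : ∀ n, meetSeq c d n ≤ min (c n) (d n) := by
  intro n
  cases n with
  | zero => simp [meetSeq]
  | succ n => exact min_le_left _ _

lemma meetSeq_succ_le (c d : ℕ → ℤ) (n : ℕ) :
    meetSeq c d (n+1) ≤ meetSeq c d n := by
  refine le_trans (min_le_right _ _) ?_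
  split <;> omega

lemma meetSeq_strict (c d : ℕ → ℤ) (n : ℕ)
    (h : c (n+1) < c n ∨ d (n+1) < d n) :
    meetSeq c d (n+1) < meetSeq c d n := by
  have h2 : meetSeq c d (n+1) ≤ meetSeq c d n - 1 := by
    simp only [meetSeq, if_pos h]
    exact min_le_right _ _
  omega

lemma meetSeq_strict' (c d : ℕ → ℤ) (hc : ∀ n, c (n+1) ≤ c n)
    (hd : ∀ n, d (n+1) ≤ d n) (n : ℕ)
    (h : meetSeq c d (n+1) < meetSeq c d n) :
    c (n+1) < c n ∨ d (n+1) < d n := by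
  by_contra hcon
  push_neg at hcon
  have hceq : c (n+1) = c n := le_antisymm (hc n) hcon.1
  have hdeq : d (n+1) = d n := le_antisymm (hd n) hcon.2
  have hne : ¬ (c (n+1) < c n ∨ d (n+1) < d n) := by omega
  have hmin := meetSeq_le_min c d n
  simp only [meetSeq] at h
  have h2 : meetSeq c d n ≤ min (min (c (n+1)) (d (n+1)))
      (meetSeq c d n - if c (n+1) < c n ∨ d (n+1) < d n then 1 else 0) := by
    rw [if_neg hne, hceq, hdeq]
    exact le_min hmin (by omega)
  exact absurd h (not_lt.mpr h2)

lemma le_meetSeq (c d g : ℕ → ℤ)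
    (hg1 : ∀ n, g n ≤ min (c n) (d n))
    (hg2 : ∀ n, (c (n+1) < c n ∨ d (n+1) < d n) → g (n+1) < g n)
    (hg3 : ∀ n, g (n+1) ≤ g n) : ∀ n, g n ≤ meetSeq c d n := by
  intro n
  induction n with
  | zero => simpa [meetSeq] using hg1 0
  | succ n ih =>
      refine le_min (hg1 (n+1)) ?_
      by_cases h : c (n+1) < c n ∨ d (n+1) < d n
      · simp only [if_pos h]
        have := hg2 n h
        omega
      · simp only [if_neg h]
        have := hg3 n
        omega

/-- For every `m ≥ 1`, `≤_m` is a partial order on `𝒫_m`, and `(𝒫_m, ≤_m)` is a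
lattice: any two elements have a least upper bound and a greatest lower bound. -/
theorem Pm_lattice (m : ℕ) (hm : 1 ≤ m) :
    IsPartialOrder (Pm m) relm ∧
    (∀ C D : Pm m, ∃ E : Pm m, relm C E ∧ relm D E ∧
      ∀ G : Pm m, relm C G → relm D G → relm E G) ∧
    (∀ C D : Pm m, ∃ E : Pm m, relm E C ∧ relm E D ∧
      ∀ G : Pm m, relm G C → relm G D → relm G E) := by
  -- extension of a sequence on `Fin m` to `ℕ`
  have hlt : ∀ n : ℕ, min n (m-1) < m := fun n => by omega
  set ext : (Fin m → ℤ) → ℕ → ℤ := fun A n => A ⟨min n (m-1), hlt n⟩ with hext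
  have ext_val : ∀ (A : Fin m → ℤ) (i : Fin m), ext A i.val = A i := by
    intro A i
    have hi : (⟨min i.val (m-1), hlt i.val⟩ : Fin m) = i := by
      apply Fin.ext
      have := i.isLt
      simp only []
      omega
    simp only [hext, hi]
  have ext_succ_le : ∀ (A : Fin m → ℤ), Antitone A → ∀ n, ext A (n+1) ≤ ext A n := by
    intro A hA n
    exact hA (by simp only [Fin.mk_le_mk]; omega)
  -- a strict drop of the extension happens only at genuine indices
  have ext_strict : ∀ (A : Fin m → ℤ) (n : ℕ), ext A (n+1) < ext A n →
      n + 1 < m := by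
    intro A n h
    by_contra hn
    have : min (n+1) (m-1) = min n (m-1) := by omega
    simp only [hext, this] at h
    exact lt_irrefl _ h
  -- transfer of the strictness condition of `relm` to extensions
  have relm_ext_strict : ∀ (X G : Pm m), relm X G →
      ∀ n, ext G.1 (n+1) < ext G.1 n → ext X.1 (n+1) < ext X.1 n := by
    intro X G hXG n h
    have hn : n + 1 < m := ext_strict G.1 n h
    have hn' : n < m := by omega
    set i : Fin m := ⟨n, hn'⟩
    set j : Fin m := ⟨n+1, hn⟩
    have hi : ext G.1 n = G.1 i := ext_val G.1 i
    have hj : ext G.1 (n+1) = G.1 j := ext_val G.1 j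
    rw [hi, hj] at h
    have := hXG.2 i j rfl h
    rw [ext_val X.1 i, ext_val X.1 j]
    exact this
  refine ⟨?_, ?_, ?_⟩
  · -- partial order
    exact
      { refl := fun C => ⟨fun i => le_refl _, fun i j _ hC => hC⟩
        trans := fun A B C hAB hBC =>
          ⟨fun i => (hAB.1 i).trans (hBC.1 i),
           fun i j hj h => hAB.2 i j hj (hBC.2 i j hj h)⟩
        antisymm := fun A B h1 h2 =>
          Subtype.ext (funext fun i => le_antisymm (h1.1 i) (h2.1 i)) }
  · -- join
    intro C D
    set c := ext C.1 with hc
    set d := ext D.1 with hd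
    have hcA : ∀ n, c (n+1) ≤ c n := ext_succ_le C.1 C.2
    have hdA : ∀ n, d (n+1) ≤ d n := ext_succ_le D.1 D.2
    have hanti : Antitone (fun i : Fin m => joinSeq c d i.val) := by
      intro i j hij
      have : ∀ a b : ℕ, a ≤ b → joinSeq c d b ≤ joinSeq c d a := by
        intro a b hab
        induction b with
        | zero => simp_all
        | succ b ihb =>
            rcases Nat.lt_or_ge a (b+1) with h | h
            · exact le_trans (joinSeq_succ_le c d hcA hdA b) (ihb (by omega))
            · have : a = b + 1 := by omega
              simp [this]
      exact this i.val j.val hij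
    refine ⟨⟨fun i => joinSeq c d i.val, hanti⟩, ?_, ?_, ?_⟩
    · constructor
      · intro i
        calc C.1 i = c i.val := (ext_val C.1 i).symm
          _ ≤ max (c i.val) (d i.val) := le_max_left _ _
          _ ≤ joinSeq c d i.val := max_le_joinSeq c d hcA hdA i.val
      · intro i j hj h
        simp only at h
        rw [hj] at h
        have hs := joinSeq_strict c d i.val h
        have : C.1 j < C.1 i := by
          have := hs.1
          rw [← hj] at this
          rw [← ext_val C.1 i, ← ext_val C.1 j]
          rw [hj]
          rw [hj] at this
          exact this
        exact this
    · constructor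
      · intro i
        calc D.1 i = d i.val := (ext_val D.1 i).symm
          _ ≤ max (c i.val) (d i.val) := le_max_right _ _
          _ ≤ joinSeq c d i.val := max_le_joinSeq c d hcA hdA i.val
      · intro i j hj h
        simp only at h
        rw [hj] at h
        have hs := joinSeq_strict c d i.val h
        rw [← ext_val D.1 i, ← ext_val D.1 j, hj]
        exact hs.2
    · intro G hCG hDG
      set g := ext G.1 with hg
      have key : ∀ n, joinSeq c d n ≤ g n := by
        apply joinSeq_le
        · intro n
          refine max_le ?_ ?_
          · exact hCG.1 ⟨min n (m-1), hlt n⟩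
          · exact hDG.1 ⟨min n (m-1), hlt n⟩
        · intro n h
          exact ⟨relm_ext_strict C G hCG n h, relm_ext_strict D G hDG n h⟩
        · exact ext_succ_le G.1 G.2
      constructor
      · intro i
        have := key i.val
        simpa [hg, ext_val G.1 i] using this
      · intro i j hj h
        rw [← ext_val G.1 i, ← ext_val G.1 j, hj] at h
        have hcd : c (i.val+1) < c i.val ∧ d (i.val+1) < d i.val :=
          ⟨relm_ext_strict C G hCG i.val h, relm_ext_strict D G hDG i.val h⟩
        simp only
        rw [hj]
        exact joinSeq_strict' c d hcA hdA i.val hcd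
  · -- meet
    intro C D
    set c := ext C.1 with hc
    set d := ext D.1 with hd
    have hcA : ∀ n, c (n+1) ≤ c n := ext_succ_le C.1 C.2
    have hdA : ∀ n, d (n+1) ≤ d n := ext_succ_le D.1 D.2
    have hanti : Antitone (fun i : Fin m => meetSeq c d i.val) := by
      intro i j hij
      have : ∀ a b : ℕ, a ≤ b → meetSeq c d b ≤ meetSeq c d a := by
        intro a b hab
        induction b with
        | zero => simp_all
        | succ b ihb =>
            rcases Nat.lt_or_ge a (b+1) with h | h
            · exact le_trans (meetSeq_succ_le c d b) (ihb (by omega))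
            · have : a = b + 1 := by omega
              simp [this]
      exact this i.val j.val hij
    refine ⟨⟨fun i => meetSeq c d i.val, hanti⟩, ?_, ?_, ?_⟩
    · constructor
      · intro i
        calc meetSeq c d i.val ≤ min (c i.val) (d i.val) := meetSeq_le_min c d i.val
          _ ≤ c i.val := min_le_left _ _
          _ = C.1 i := ext_val C.1 i
      · intro i j hj h
        simp only
        rw [hj]
        refine meetSeq_strict c d i.val (Or.inl ?_)
        rw [← ext_val C.1 i, ← ext_val C.1 j, hj] at h
        exact h
    · constructor
      · intro i
        calc meetSeq c d i.val ≤ min (c i.val) (d i.val) := meetSeq_le_min c d i.val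
          _ ≤ d i.val := min_le_right _ _
          _ = D.1 i := ext_val D.1 i
      · intro i j hj h
        simp only
        rw [hj]
        refine meetSeq_strict c d i.val (Or.inr ?_)
        rw [← ext_val D.1 i, ← ext_val D.1 j, hj] at h
        exact h
    · intro G hGC hGD
      set g := ext G.1 with hg
      have key : ∀ n, g n ≤ meetSeq c d n := by
        apply le_meetSeq
        · intro n
          exact le_min (hGC.1 ⟨min n (m-1), hlt n⟩) (hGD.1 ⟨min n (m-1), hlt n⟩)
        · intro n h
          rcases h with h | h
          · exact relm_ext_strict G C hGC n h
          · exact relm_ext_strict G D hGD n h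
        · exact ext_succ_le G.1 G.2
      constructor
      · intro i
        have := key i.val
        simpa [hg, ext_val G.1 i] using this
      · intro i j hj h
        simp only at h
        rw [hj] at h
        -- meetSeq strict at step i implies c or d strict, hence g strict
        have hcd : c (i.val+1) < c i.val ∨ d (i.val+1) < d i.val :=
          meetSeq_strict' c d hcA hdA i.val h
        have hstep : g (i.val+1) < g i.val := by
          rcases hcd with h' | h'
          · exact relm_ext_strict G C hGC i.val h'
          · exact relm_ext_strict G D hGD i.val h'
        rw [← ext_val G.1 i, ← ext_val G.1 j, hj]
        exact hstep
end

section
/- Let C, D ∈ 𝒫_m with D ≤_m C. Then the Möbius function of the poset (𝒫_m, ≤_m) satisfies μ(D,C) = (−1)^{|S_C(D)|} if D ∈ 𝔹_C, and μ(D,C) = 0 if D ∉ 𝔹_C. -/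
/-- Position `i` is the start of a block of `C` (i.e. `i = 0` or `C_{i-1} > C_i`). -/
def IsStart {m : ℕ} (C : Fin m → ℤ) (i : Fin m) : Prop :=
  (i : ℕ) = 0 ∨ ∃ h : Fin m, (i : ℕ) = (h : ℕ) + 1 ∧ C i < C h

/-- Membership `D ∈ 𝔹_C`: writing `C = M₁^{m₁}⋯M_t^{m_t}` (blocks of equal entries),
`D` is a concatenation of words `X^i ∈ B_i` where each `X^i = x₁⋯x_{m_i}` satisfies
`x_{j+1} ∈ {x_j, x_j − 1}` starting from `x₀ = M_i`, and ends with `x_{m_i} > M_{i+1}`.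
Equivalently: at each block start `D_i ∈ {C_i, C_i − 1}`; inside a block
`D_{i+1} ∈ {D_i, D_i − 1}`; and at each block end (followed by a strictly smaller
block value `C_{i+1}`) one has `D_i > C_{i+1}`. -/
def InBC {m : ℕ} (C D : Fin m → ℤ) : Prop :=
  (∀ i : Fin m, IsStart C i → (D i = C i ∨ D i = C i - 1)) ∧
  (∀ i j : Fin m, (j : ℕ) = (i : ℕ) + 1 → C i = C j → (D j = D i ∨ D j = D i - 1)) ∧
  (∀ i j : Fin m, (j : ℕ) = (i : ℕ) + 1 → C j < C i → C j < D i)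

/-- The set `S_C(D)` of positions at which the word `D ∈ 𝔹_C` takes a downward step
(`x_{j+1} = x_j − 1`) relative to its reference (`C_i` at a block start, the previous
entry of `D` inside a block). -/
def SCD {m : ℕ} (C D : Fin m → ℤ) : Set (Fin m) :=
  {i | (IsStart C i ∧ D i = C i - 1) ∨
       ∃ h : Fin m, (i : ℕ) = (h : ℕ) + 1 ∧ C h = C i ∧ D i = D h - 1}

namespace MoP

variable {m : ℕ}

/-- function-level version of `relm`. -/
def relf (D C : Fin m → ℤ) : Prop :=
  (∀ i, D i ≤ C i) ∧ ∀ i j : Fin m, (j : ℕ) = (i : ℕ) + 1 → C j < C i → D j < D i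

lemma consec_le {i j : Fin m} (h : (j:ℕ) = (i:ℕ)+1) : i ≤ j := by
  rw [Fin.le_def]; omega

lemma consec_eq {i i' j : Fin m} (h : (j:ℕ) = (i:ℕ)+1) (h' : (j:ℕ) = (i':ℕ)+1) : i = i' :=
  Fin.ext (by omega)

lemma exists_pred (i : Fin m) (h : (i:ℕ) ≠ 0) : ∃ h' : Fin m, (i:ℕ) = (h':ℕ)+1 := by
  have := i.isLt
  exact ⟨⟨(i:ℕ)-1, by omega⟩, by simp; omega⟩

lemma blockEq {C : Fin m → ℤ} (hC : Antitone C) {i j l : Fin m} (hil : i ≤ l) (hlj : l ≤ j)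
    (hij : C j = C i) : C l = C i :=
  le_antisymm (hC hil) (hij ▸ hC hlj)

lemma start_min {C : Fin m → ℤ} (hC : Antitone C) {s q : Fin m} (hs : IsStart C s)
    (hq : C q = C s) : s ≤ q := by
  by_contra hlt
  push_neg at hlt
  rcases hs with h0 | ⟨h, hh, hlt'⟩
  · exact absurd (Fin.lt_def.mp hlt) (by omega)
  · have hqh : q ≤ h := by rw [Fin.le_def]; have := Fin.lt_def.mp hlt; omega
    have : C h ≤ C q := hC hqh
    omega

lemma not_start {C : Fin m → ℤ} (hC : Antitone C) {i : Fin m} (h : ¬ IsStart C i) :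
    ∃ h' : Fin m, (i:ℕ) = (h':ℕ)+1 ∧ C h' = C i := by
  unfold IsStart at h; push_neg at h
  obtain ⟨h0, hforall⟩ := h
  obtain ⟨h', hh'⟩ := exists_pred i h0
  exact ⟨h', hh', le_antisymm (hforall h' hh') (hC (consec_le hh'))⟩

lemma not_start_inner {C : Fin m → ℤ} {i h : Fin m} (hh : (i:ℕ) = (h:ℕ)+1)
    (hch : C h = C i) : ¬ IsStart C i := by
  rintro (h0 | ⟨h', hh', hlt⟩)
  · omega
  · have := consec_eq hh hh'; subst this; omega

lemma scd_start {C E : Fin m → ℤ} {i : Fin m} (hst : IsStart C i) :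
    i ∈ SCD C E ↔ E i = C i - 1 := by
  constructor
  · rintro (⟨_, h⟩ | ⟨h, hh, hch, _⟩)
    · exact h
    · exact absurd hst (not_start_inner hh hch)
  · exact fun h => Or.inl ⟨hst, h⟩

lemma scd_inner {C E : Fin m → ℤ} {i h : Fin m} (hh : (i:ℕ) = (h:ℕ)+1) (hch : C h = C i) :
    i ∈ SCD C E ↔ E i = E h - 1 := by
  constructor
  · rintro (⟨hst, _⟩ | ⟨h', hh', hch', hE⟩)
    · exact absurd hst (not_start_inner hh hch)
    · have := consec_eq hh' hh; subst this; exact hE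
  · exact fun hE => Or.inr ⟨h, hh, hch, hE⟩

/-- The set `F'` of "free" positions. -/
def Fr (C D : Fin m → ℤ) (q : Fin m) : Prop :=
  (IsStart C q ∧ D q < C q) ∨ (∃ h : Fin m, (q:ℕ) = (h:ℕ)+1 ∧ C h = C q ∧ D q < D h)

lemma fr_start {C D : Fin m → ℤ} {l : Fin m} (hst : IsStart C l) (hfr : Fr C D l) :
    D l < C l := by
  rcases hfr with ⟨_, h⟩ | ⟨h, hh, hch, _⟩
  · exact h
  · exact absurd hst (not_start_inner hh hch)

lemma fr_inner {C D : Fin m → ℤ} {l h : Fin m} (hh : (l:ℕ) = (h:ℕ)+1) (hch : C h = C l)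
    (hfr : Fr C D l) : D l < D h := by
  rcases hfr with ⟨hst, _⟩ | ⟨h', hh', hch', hlt⟩
  · exact absurd hst (not_start_inner hh hch)
  · have := consec_eq hh' hh; subst this; exact hlt

open Classical in
/-- number of free positions in the block of `l`, up to `l`. -/
noncomputable def cnt (C D : Fin m → ℤ) (l : Fin m) : ℕ :=
  (Finset.univ.filter (fun q => C q = C l ∧ q ≤ l ∧ Fr C D q)).card

open Classical in
lemma cnt_start {C D : Fin m → ℤ} (hC : Antitone C) {l : Fin m} (hst : IsStart C l) :
    cnt C D l = if Fr C D l then 1 else 0 := by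
  classical
  unfold cnt
  have : (Finset.univ.filter (fun q => C q = C l ∧ q ≤ l ∧ Fr C D q)) =
      if Fr C D l then {l} else ∅ := by
    ext q
    simp only [Finset.mem_filter, Finset.mem_univ, true_and]
    constructor
    · rintro ⟨hcq, hql, hfq⟩
      have : q = l := le_antisymm hql (start_min hC hst hcq)
      subst this
      simp [hfq]
    · intro hq
      split at hq
      · simp only [Finset.mem_singleton] at hq; subst hq
        exact ⟨rfl, le_refl _, ‹_›⟩
      · simp at hq
  rw [this]; split <;> simp

open Classical in
lemma cnt_step {C D : Fin m → ℤ} {l h : Fin m} (hh : (l:ℕ) = (h:ℕ)+1) (hch : C h = C l) :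
    cnt C D l = cnt C D h + (if Fr C D l then 1 else 0) := by
  classical
  unfold cnt
  have hset : (Finset.univ.filter (fun q => C q = C l ∧ q ≤ l ∧ Fr C D q)) =
      (Finset.univ.filter (fun q => C q = C h ∧ q ≤ h ∧ Fr C D q)) ∪
      (if Fr C D l then {l} else ∅) := by
    ext q
    simp only [Finset.mem_filter, Finset.mem_union, Finset.mem_univ, true_and]
    constructor
    · rintro ⟨hcq, hql, hfq⟩
      rcases eq_or_ne q l with rfl | hne
      · right; split
        · simp
        · exact absurd hfq ‹_›
      · left
        refine ⟨hcq.trans hch.symm, ?_, hfq⟩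
        rw [Fin.le_def] at hql ⊢
        have : (q:ℕ) ≠ (l:ℕ) := fun hc => hne (Fin.ext hc)
        omega
    · rintro (⟨hcq, hqh, hfq⟩ | hq)
      · exact ⟨hcq.trans hch, le_trans hqh (consec_le hh), hfq⟩
      · split at hq
        · simp only [Finset.mem_singleton] at hq; subst hq
          exact ⟨rfl, le_refl _, ‹_›⟩
        · simp at hq
  rw [hset, Finset.card_union_of_disjoint]
  · congr 1; split <;> simp
  · split
    · simp only [Finset.disjoint_singleton_right, Finset.mem_filter, Finset.mem_univ, true_and,
        not_and]
      intro _ hql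
      rw [Fin.le_def] at hql; omega
    · simp



/-- Invariant (B): the number of free positions in a block up to `l` is at most `C l - D l`. -/
lemma cnt_le {C D : Fin m → ℤ} (hC : Antitone C) (hD : Antitone D)
    (hle : ∀ i, D i ≤ C i) :
    ∀ l : Fin m, (cnt C D l : ℤ) ≤ C l - D l := by
  suffices h : ∀ n, ∀ l : Fin m, (l:ℕ) = n → (cnt C D l : ℤ) ≤ C l - D l by
    intro l; exact h l l rfl
  intro n
  induction n using Nat.strong_induction_on with
  | _ n ih =>
    intro l hl
    by_cases hst : IsStart C l
    · rw [cnt_start hC hst]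
      split
      · have := fr_start hst ‹_›; push_cast; omega
      · have := hle l; push_cast; omega
    · obtain ⟨h, hh, hch⟩ := not_start hC hst
      have ihh := ih (h:ℕ) (by omega) h rfl
      rw [cnt_step hh hch]
      by_cases hfr : Fr C D l
      · have hdlt : D l < D h := fr_inner hh hch hfr
        simp only [hfr, if_true]; push_cast; omega
      · have : D l ≤ D h := hD (consec_le hh)
        simp only [hfr, if_false]; push_cast; omega

/-- Invariant (A): if `E ∈ 𝔹_C` takes no downward step at `p`, then within the block of `p`,
`C l - E l` (plus one from `p` onwards) is bounded by the number of free positions. -/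
lemma invA {C D E : Fin m → ℤ} (hC : Antitone C)
    (hDE : relf D E) (hEB : InBC C E) {p : Fin m} (hfr : Fr C D p)
    (hbit : p ∉ SCD C E) :
    ∀ l : Fin m, C l = C p →
      C l - E l + (if p ≤ l then 1 else 0) ≤ (cnt C D l : ℤ) := by
  classical
  suffices h : ∀ n, ∀ l : Fin m, (l:ℕ) = n → C l = C p →
      C l - E l + (if p ≤ l then 1 else 0) ≤ (cnt C D l : ℤ) by
    intro l; exact h l l rfl
  intro n
  induction n using Nat.strong_induction_on with
  | _ n ih =>
    intro l hl hcl
    by_cases hst : IsStart C l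
    · -- base case: l is the block start, so p ≤ l → p = l
      rw [cnt_start hC hst]
      have hlp : l ≤ p := start_min hC hst hcl.symm
      by_cases hple : p ≤ l
      · have : p = l := le_antisymm hple hlp
        subst this
        have hbit' : E p ≠ C p - 1 := fun hc => hbit ((scd_start hst).mpr hc)
        have hEp : E p = C p := by
          rcases hEB.1 p hst with h1 | h1
          · exact h1
          · exact absurd h1 hbit'
        rw [if_pos (le_refl p), if_pos hfr]
        rw [hcl] at hEp ⊢
        omega
      · rw [if_neg hple]
        rcases hEB.1 l hst with h1 | h1
        · split <;> omega
        · have hfl : Fr C D l := Or.inl ⟨hst, by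
            have h2 : D l ≤ E l := hDE.1 l
            omega⟩
          rw [if_pos hfl]; omega
    · obtain ⟨h, hh, hch⟩ := not_start hC hst
      have hchp : C h = C p := hch.trans hcl
      have ihh := ih (h:ℕ) (by omega) h rfl hchp
      rw [cnt_step hh hch]
      rcases eq_or_ne l p with heq | hne
      · -- l = p, p is inner, no step at p
        have hbit' : E l ≠ E h - 1 := fun hc => hbit (heq ▸ ((scd_inner hh hch).mpr hc))
        have hEl : E l = E h := by
          rcases hEB.2.1 h l hh hch with h1 | h1
          · exact h1
          · exact absurd h1 hbit'
        have hph : ¬ p ≤ h := by rw [Fin.le_def]; omega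
        rw [if_neg hph] at ihh
        have hfl : Fr C D l := heq ▸ hfr
        rw [if_pos (heq ▸ le_refl p : p ≤ l), if_pos hfl]
        push_cast
        rw [hcl] at *
        omega
      · have hind : (if p ≤ l then (1:ℤ) else 0) = (if p ≤ h then 1 else 0) := by
          by_cases hpl : p ≤ l
          · have : p ≤ h := by
              rw [Fin.le_def] at hpl ⊢
              have : (p:ℕ) ≠ (l:ℕ) := fun hc => hne (Fin.ext hc.symm)
              omega
            simp [hpl, this]
          · have : ¬ p ≤ h := fun hc => hpl (le_trans hc (consec_le hh))
            simp [hpl, this]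
        rcases hEB.2.1 h l hh hch with h1 | h1
        · -- no step at l
          have hge : (cnt C D h : ℤ) ≤ cnt C D h + (if Fr C D l then 1 else 0) := by
            split <;> push_cast <;> omega
          rw [hind]
          push_cast at hge ⊢
          rw [hcl] at *
          omega
        · -- step at l ⇒ l is free
          have hfl : Fr C D l := Or.inr ⟨h, hh, hch, hDE.2 h l hh (by omega)⟩
          rw [if_pos hfl, hind]
          push_cast
          rw [hcl] at *
          omega

/-- Invariant (A'): if `E ∈ 𝔹_C` takes a downward step at `p`, then `E < C` on the block of
`p` from `p` onwards. -/
lemma invA' {C E : Fin m → ℤ} (hC : Antitone C) (hE : Antitone E) (hEB : InBC C E)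
    (hEC : ∀ i, E i ≤ C i) {p : Fin m} (hbit : p ∈ SCD C E) :
    ∀ l : Fin m, C l = C p → p ≤ l → E l < C l := by
  suffices h : ∀ n, ∀ l : Fin m, (l:ℕ) = n → C l = C p → p ≤ l → E l < C l by
    intro l; exact h l l rfl
  intro n
  induction n using Nat.strong_induction_on with
  | _ n ih =>
    intro l hl hcl hpl
    rcases eq_or_ne l p with rfl | hne
    · by_cases hst : IsStart C l
      · have := (scd_start hst).mp hbit; omega
      · obtain ⟨h, hh, hch⟩ := not_start hC hst
        have := (scd_inner hh hch).mp hbit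
        have := hEC h
        omega
    · have hlne0 : (l:ℕ) ≠ 0 := by
        rw [Fin.le_def] at hpl
        have : (p:ℕ) ≠ (l:ℕ) := fun hc => hne (Fin.ext hc.symm)
        omega
      obtain ⟨h, hh⟩ := exists_pred l hlne0
      have hph : p ≤ h := by
        rw [Fin.le_def] at hpl ⊢
        have : (p:ℕ) ≠ (l:ℕ) := fun hc => hne (Fin.ext hc.symm)
        omega
      have hch : C h = C p := blockEq hC hph (consec_le hh) hcl
      have := ih (h:ℕ) (by omega) h rfl hch hph
      have := hE (consec_le hh)
      omega

/-- From a position where `D < C`, reach a free position in the same block. -/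
lemma fr_reach {C D : Fin m → ℤ} (hC : Antitone C) (hD : Antitone D) :
    ∀ l : Fin m, D l < C l → ∃ q, C q = C l ∧ Fr C D q := by
  suffices h : ∀ n, ∀ l : Fin m, (l:ℕ) = n → D l < C l → ∃ q, C q = C l ∧ Fr C D q by
    intro l; exact h l l rfl
  intro n
  induction n using Nat.strong_induction_on with
  | _ n ih =>
    intro l hl hlt
    by_cases hst : IsStart C l
    · exact ⟨l, rfl, Or.inl ⟨hst, hlt⟩⟩
    · obtain ⟨h, hh, hch⟩ := not_start hC hst
      by_cases hd : D l < D h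
      · exact ⟨l, rfl, Or.inr ⟨h, hh, hch, hd⟩⟩
      · have heq : D h = D l := le_antisymm (by omega) (hD (consec_le hh))
        obtain ⟨q, hq, hfq⟩ := ih (h:ℕ) (by omega) h rfl (by omega)
        exact ⟨q, hq.trans hch, hfq⟩

/-- Every position has a block end. -/
lemma block_end {C : Fin m → ℤ} (hC : Antitone C) (i : Fin m) :
    ∃ k : Fin m, i ≤ k ∧ C k = C i ∧
      ((k:ℕ)+1 = m ∨ ∃ k' : Fin m, (k':ℕ) = (k:ℕ)+1 ∧ C k' < C k) := by
  suffices h : ∀ n, ∀ i : Fin m, m - (i:ℕ) = n → ∃ k : Fin m, i ≤ k ∧ C k = C i ∧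
      ((k:ℕ)+1 = m ∨ ∃ k' : Fin m, (k':ℕ) = (k:ℕ)+1 ∧ C k' < C k) by
    exact h (m - (i:ℕ)) i rfl
  intro n
  induction n using Nat.strong_induction_on with
  | _ n ih =>
    intro i hi
    by_cases hlast : (i:ℕ)+1 = m
    · exact ⟨i, le_refl _, rfl, Or.inl hlast⟩
    · have hlt : (i:ℕ)+1 < m := by have := i.isLt; omega
      set i' : Fin m := ⟨(i:ℕ)+1, hlt⟩ with hi'
      have hii' : (i':ℕ) = (i:ℕ)+1 := rfl
      by_cases hc : C i' < C i
      · exact ⟨i, le_refl _, rfl, Or.inr ⟨i', rfl, hc⟩⟩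
      · have hceq : C i' = C i := le_antisymm (hC (consec_le hii')) (by omega)
        obtain ⟨k, hk1, hk2, hk3⟩ := ih (m - (i':ℕ)) (by omega) i' rfl
        exact ⟨k, le_trans (consec_le hii') hk1, hk2.trans hceq, hk3⟩

/-- Existence of a good toggling position `p` with block end `k`. -/
lemma exists_pk {C D : Fin m → ℤ} (hC : Antitone C) (hD : Antitone D) (hDC : relf D C)
    (hne : ∃ i, D i < C i) :
    ∃ p k : Fin m, Fr C D p ∧ p ≤ k ∧ C k = C p ∧
      ((k:ℕ)+1 = m ∨ ∃ k' : Fin m, (k':ℕ) = (k:ℕ)+1 ∧ C k' < C k) ∧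
      (∀ k' : Fin m, (k':ℕ) = (k:ℕ)+1 → (cnt C D k : ℤ) ≤ C k - C k' - 1) := by
  obtain ⟨i, hi⟩ := hne
  obtain ⟨q0, _, hfq0⟩ := fr_reach hC hD i hi
  suffices h : ∀ n, ∀ q : Fin m, m - (q:ℕ) ≤ n → Fr C D q →
      ∃ p k : Fin m, Fr C D p ∧ p ≤ k ∧ C k = C p ∧
      ((k:ℕ)+1 = m ∨ ∃ k' : Fin m, (k':ℕ) = (k:ℕ)+1 ∧ C k' < C k) ∧
      (∀ k' : Fin m, (k':ℕ) = (k:ℕ)+1 → (cnt C D k : ℤ) ≤ C k - C k' - 1) by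
    exact h m q0 (by omega) hfq0
  intro n
  induction n with
  | zero => intro q hq; have := q.isLt; omega
  | succ n ihn =>
    intro q hq hfq
    obtain ⟨k, hqk, hck, hkend⟩ := block_end hC q
    by_cases hgood : ∀ k' : Fin m, (k':ℕ) = (k:ℕ)+1 → (cnt C D k : ℤ) ≤ C k - C k' - 1
    · exact ⟨q, k, hfq, hqk, hck, hkend, hgood⟩
    · push_neg at hgood
      obtain ⟨k', hk', hbad⟩ := hgood
      have hcnt := cnt_le hC hD hDC.1 k
      have hckk' : C k' < C k := by
        rcases hkend with h1 | ⟨k'', hk'', hlt⟩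
        · omega
        · have : k' = k'' := Fin.ext (by omega)
          subst this; exact hlt
      have hDk' : D k' < D k := hDC.2 k k' hk' hckk'
      have hstart : IsStart C k' := Or.inr ⟨k, hk', hckk'⟩
      have hfrk' : Fr C D k' := Or.inl ⟨hstart, by omega⟩
      have hle : m - (k':ℕ) ≤ n := by
        rw [Fin.le_def] at hqk
        have := k'.isLt
        omega
      exact ihn k' hle hfrk'


lemma antitone_of_consec {f : Fin m → ℤ} (h : ∀ i j : Fin m, (j:ℕ) = (i:ℕ)+1 → f j ≤ f i) :
    Antitone f := by
  have key : ∀ d : ℕ, ∀ a b : Fin m, (b:ℕ) = (a:ℕ) + d → f b ≤ f a := by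
    intro d
    induction d with
    | zero =>
      intro a b hab
      have : b = a := Fin.ext (by omega)
      subst this; exact le_refl _
    | succ d ihd =>
      intro a b hab
      have hlt : (a:ℕ) + d < m := by have := b.isLt; omega
      set c : Fin m := ⟨(a:ℕ)+d, hlt⟩ with hc
      have hcv : (c:ℕ) = (a:ℕ) + d := rfl
      have h1 : (b:ℕ) = (c:ℕ) + 1 := by omega
      exact le_trans (h c b h1) (ihd a c hcv)
  intro a b hab
  exact key ((b:ℕ) - (a:ℕ)) a b (by rw [Fin.le_def] at hab; omega)

/-- The block-suffix from `p` on. -/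
def Jset (C : Fin m → ℤ) (p l : Fin m) : Prop := p ≤ l ∧ C l = C p

open Classical in
/-- Toggle the step of `E` at position `p`: shift the block of `p`, from `p` on, by `±1`. -/
noncomputable def tog (C : Fin m → ℤ) (p : Fin m) (E : Fin m → ℤ) : Fin m → ℤ :=
  fun l => if Jset C p l then E l + (if p ∈ SCD C E then 1 else -1) else E l

section Invol

variable {C D : Fin m → ℤ} {p k : Fin m}

lemma J_le_k (hC : Antitone C) (hck : C k = C p)
    (hkend : (k:ℕ)+1 = m ∨ ∃ k' : Fin m, (k':ℕ) = (k:ℕ)+1 ∧ C k' < C k) :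
    ∀ l, Jset C p l → l ≤ k := by
  rintro l ⟨hpl, hcl⟩
  rcases hkend with h1 | ⟨k', hk', hlt⟩
  · rw [Fin.le_def]; have := l.isLt; omega
  · by_contra hc
    push_neg at hc
    have hk'l : k' ≤ l := by
      rw [Fin.le_def]; have := Fin.lt_def.mp hc; omega
    have := hC hk'l
    omega

lemma J_entry (hC : Antitone C) : ∀ i j : Fin m, (j:ℕ) = (i:ℕ)+1 →
    Jset C p j → ¬ Jset C p i → j = p := by
  rintro i j hij ⟨hpj, hcj⟩ hJi
  by_contra hne
  apply hJi
  have hpi : p ≤ i := by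
    rw [Fin.le_def] at hpj ⊢
    have : (j:ℕ) ≠ (p:ℕ) := fun hc => hne (Fin.ext hc)
    omega
  refine ⟨hpi, le_antisymm (hC hpi) ?_⟩
  rw [← hcj]
  exact hC (consec_le hij)

lemma J_exit (hC : Antitone C) (hck : C k = C p)
    (hkend : (k:ℕ)+1 = m ∨ ∃ k' : Fin m, (k':ℕ) = (k:ℕ)+1 ∧ C k' < C k) :
    ∀ i j : Fin m, (j:ℕ) = (i:ℕ)+1 → Jset C p i → ¬ Jset C p j → i = k ∧ C j < C i := by
  rintro i j hij ⟨hpi, hci⟩ hJj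
  have hpj : p ≤ j := le_trans hpi (consec_le hij)
  have hik : i ≤ k := J_le_k hC hck hkend i ⟨hpi, hci⟩
  have hcj : C j ≠ C p := fun hc => hJj ⟨hpj, hc⟩
  have hcji : C j < C i := by
    have := hC (consec_le hij)
    omega
  refine ⟨?_, hcji⟩
  by_contra hne
  have hjk : j ≤ k := by
    rw [Fin.le_def] at hik ⊢
    have : (i:ℕ) ≠ (k:ℕ) := fun hc => hne (Fin.ext hc)
    omega
  exact hcj (blockEq hC hpj hjk hck)

open Classical in
/-- The master lemma: toggling at a good position `p` preserves membership of the
summation set, flips the sign, and is involutive. -/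
lemma tog_good (hC : Antitone C) (hD : Antitone D) (hDC : relf D C)
    (hfr : Fr C D p) (hpk : p ≤ k) (hck : C k = C p)
    (hkend : (k:ℕ)+1 = m ∨ ∃ k' : Fin m, (k':ℕ) = (k:ℕ)+1 ∧ C k' < C k)
    (hcnt : ∀ k' : Fin m, (k':ℕ) = (k:ℕ)+1 → (cnt C D k : ℤ) ≤ C k - C k' - 1)
    (E : Fin m → ℤ) (hEa : Antitone E) (hDE : relf D E) (hEC : relf E C)
    (hEB : InBC C E) :
    Antitone (tog C p E) ∧ relf D (tog C p E) ∧ relf (tog C p E) C ∧ InBC C (tog C p E) ∧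
    (SCD C (tog C p E) = if p ∈ SCD C E then SCD C E \ {p} else insert p (SCD C E)) ∧
    tog C p (tog C p E) = E := by
  classical
  set δ : ℤ := if p ∈ SCD C E then 1 else -1 with hδ
  set E' : Fin m → ℤ := tog C p E with hE'def
  have hEJ : ∀ l, Jset C p l → E' l = E l + δ := by
    intro l hl; rw [hE'def]; unfold tog; rw [if_pos hl]
  have hEN : ∀ l, ¬ Jset C p l → E' l = E l := by
    intro l hl; rw [hE'def]; unfold tog; rw [if_neg hl]
  have hJp : Jset C p p := ⟨le_refl _, rfl⟩
  have hδge : -1 ≤ δ ∧ δ ≤ 1 ∧ δ ≠ 0 := by rw [hδ]; split <;> norm_num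
  have hlow : p ∉ SCD C E → ∀ l, Jset C p l → D l + 1 ≤ E l := by
    rintro hbit l ⟨hpl, hcl⟩
    have h1 := invA hC hDE hEB hfr hbit l hcl
    rw [if_pos hpl] at h1
    have h2 := cnt_le hC hD hDC.1 l
    omega
  have hupp : p ∈ SCD C E → ∀ l, Jset C p l → E l + 1 ≤ C l := by
    rintro hbit l ⟨hpl, hcl⟩
    have := invA' hC hEa hEB hEC.1 hbit l hcl hpl
    omega
  have hend : p ∉ SCD C E → ∀ j : Fin m, (j:ℕ) = (k:ℕ)+1 → C j + 2 ≤ E k := by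
    intro hbit j hj
    have h1 := invA hC hDE hEB hfr hbit k hck
    rw [if_pos hpk] at h1
    have h2 := hcnt j hj
    omega
  have hpcase : IsStart C p ∨ ∃ h : Fin m, (p:ℕ) = (h:ℕ)+1 ∧ C h = C p ∧ ¬ Jset C p h := by
    by_cases hst : IsStart C p
    · exact Or.inl hst
    · obtain ⟨h, hh, hch⟩ := not_start hC hst
      refine Or.inr ⟨h, hh, hch, ?_⟩
      rintro ⟨hph, -⟩
      rw [Fin.le_def] at hph; omega
  -- value of E at p according to the bit
  have hvalp : (p ∈ SCD C E → (IsStart C p → E p = C p - 1) ∧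
        (∀ h : Fin m, (p:ℕ) = (h:ℕ)+1 → C h = C p → E p = E h - 1)) ∧
      (p ∉ SCD C E → (IsStart C p → E p = C p) ∧
        (∀ h : Fin m, (p:ℕ) = (h:ℕ)+1 → C h = C p → E p = E h)) := by
    constructor
    · intro hbit
      exact ⟨fun hst => (scd_start hst).mp hbit,
        fun h hh hch => (scd_inner hh hch).mp hbit⟩
    · intro hbit
      constructor
      · intro hst
        rcases hEB.1 p hst with h1 | h1
        · exact h1
        · exact absurd ((scd_start hst).mpr h1) hbit
      · intro h hh hch
        rcases hEB.2.1 h p hh hch with h1 | h1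
        · exact h1
        · exact absurd ((scd_inner hh hch).mpr h1) hbit
  -- Antitone
  have goalA : Antitone E' := by
    apply antitone_of_consec
    intro i j hij
    by_cases hJi : Jset C p i <;> by_cases hJj : Jset C p j
    · rw [hEJ i hJi, hEJ j hJj]
      have := hEa (consec_le hij); omega
    · obtain ⟨rfl, hcj⟩ := J_exit hC hck hkend i j hij hJi hJj
      rw [hEJ i hJi, hEN j hJj]
      have h1 : C j < E i := hEB.2.2 i j hij hcj
      have h2 : E j ≤ C j := hEC.1 j
      omega
    · have hjp : j = p := J_entry hC i j hij hJj hJi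
      have hij' : (p:ℕ) = (i:ℕ)+1 := by rw [← hjp]; exact hij
      rw [hjp, hEJ p hJp, hEN i hJi]
      rcases hpcase with hst | ⟨h, hh, hch, -⟩
      · -- p is a start; i is previous block's end
        have hlt' : C p < C i := by
          rcases hst with h0 | ⟨h', hh', hlt'⟩
          · omega
          · have : h' = i := consec_eq hh' hij'
            subst this; exact hlt'
        have h1 : C p < E i := hEB.2.2 i p hij' hlt'
        by_cases hbit : p ∈ SCD C E
        · have := (hvalp.1 hbit).1 hst
          rw [hδ, if_pos hbit]
          omega
        · have := hEC.1 p
          rw [hδ, if_neg hbit]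
          omega
      · have heqi : h = i := consec_eq hh hij'
        rw [heqi] at hh hch
        by_cases hbit : p ∈ SCD C E
        · have := (hvalp.1 hbit).2 i hh hch
          rw [hδ, if_pos hbit]; omega
        · have := hEa (consec_le hij')
          rw [hδ, if_neg hbit]; omega
    · rw [hEN i hJi, hEN j hJj]
      exact hEa (consec_le hij)
  -- relf D E'
  have goalD : relf D E' := by
    constructor
    · intro l
      by_cases hJ : Jset C p l
      · rw [hEJ l hJ]
        by_cases hbit : p ∈ SCD C E
        · have := hDE.1 l
          rw [hδ, if_pos hbit]; omega
        · have := hlow hbit l hJ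
          rw [hδ, if_neg hbit]; omega
      · rw [hEN l hJ]; exact hDE.1 l
    · intro i j hij hlt
      by_cases hJi : Jset C p i <;> by_cases hJj : Jset C p j
      · rw [hEJ i hJi, hEJ j hJj] at hlt
        exact hDE.2 i j hij (by omega)
      · exact hDC.2 i j hij (J_exit hC hck hkend i j hij hJi hJj).2
      · have hjp : j = p := J_entry hC i j hij hJj hJi
        have hij' : (p:ℕ) = (i:ℕ)+1 := by rw [← hjp]; exact hij
        rw [hjp]
        rcases hpcase with hst | ⟨h, hh, hch, -⟩
        · have hlt' : C p < C i := by
            rcases hst with h0 | ⟨h', hh', hlt'⟩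
            · omega
            · have : h' = i := consec_eq hh' hij'
              subst this; exact hlt'
          exact hDC.2 i p hij' hlt'
        · have heqi : h = i := consec_eq hh hij'
          rw [heqi] at hh hch
          exact fr_inner hh hch hfr
      · rw [hEN i hJi, hEN j hJj] at hlt
        exact hDE.2 i j hij hlt
  -- relf E' C
  have goalC : relf E' C := by
    constructor
    · intro l
      by_cases hJ : Jset C p l
      · rw [hEJ l hJ]
        by_cases hbit : p ∈ SCD C E
        · have := hupp hbit l hJ
          rw [hδ, if_pos hbit]; omega
        · have := hEC.1 l
          rw [hδ, if_neg hbit]; omega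
      · rw [hEN l hJ]; exact hEC.1 l
    · intro i j hij hlt
      by_cases hJi : Jset C p i <;> by_cases hJj : Jset C p j
      · exact absurd hlt (by have := hJi.2; have := hJj.2; omega)
      · obtain ⟨rfl, -⟩ := J_exit hC hck hkend i j hij hJi hJj
        rw [hEJ i hJi, hEN j hJj]
        by_cases hbit : p ∈ SCD C E
        · have h1 : C j < E i := hEB.2.2 i j hij hlt
          have h2 : E j ≤ C j := hEC.1 j
          rw [hδ, if_pos hbit]; omega
        · have h1 := hend hbit j hij
          have h2 : E j ≤ C j := hEC.1 j
          rw [hδ, if_neg hbit]; omega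
      · have hjp : j = p := J_entry hC i j hij hJj hJi
        have hij' : (p:ℕ) = (i:ℕ)+1 := by rw [← hjp]; exact hij
        rw [hjp] at hlt ⊢
        rw [hEJ p hJp, hEN i hJi]
        have h1 : C p < E i := hEB.2.2 i p hij' hlt
        by_cases hbit : p ∈ SCD C E
        · have := hupp hbit p hJp
          rw [hδ, if_pos hbit]; omega
        · have := hEC.1 p
          rw [hδ, if_neg hbit]; omega
      · rw [hEN i hJi, hEN j hJj]
        exact hEC.2 i j hij hlt
  -- InBC C E'
  have goalB : InBC C E' := by
    refine ⟨?_, ?_, ?_⟩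
    · intro i hst
      by_cases hJ : Jset C p i
      · have hip : i = p := le_antisymm (start_min hC hst hJ.2.symm) hJ.1
        rw [hip] at hst ⊢
        rw [hEJ p hJp]
        by_cases hbit : p ∈ SCD C E
        · have := (hvalp.1 hbit).1 hst
          rw [hδ, if_pos hbit]
          left; omega
        · have := (hvalp.2 hbit).1 hst
          rw [hδ, if_neg hbit]
          right; omega
      · rw [hEN i hJ]; exact hEB.1 i hst
    · intro i j hij hcij
      by_cases hJi : Jset C p i <;> by_cases hJj : Jset C p j
      · rw [hEJ i hJi, hEJ j hJj]
        rcases hEB.2.1 i j hij hcij with h1 | h1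
        · left; omega
        · right; omega
      · exact absurd hcij (by have := (J_exit hC hck hkend i j hij hJi hJj).2; omega)
      · have hjp : j = p := J_entry hC i j hij hJj hJi
        have hij' : (p:ℕ) = (i:ℕ)+1 := by rw [← hjp]; exact hij
        rw [hjp] at hcij ⊢
        rw [hEJ p hJp, hEN i hJi]
        have hcip : C i = C p := hcij
        by_cases hbit : p ∈ SCD C E
        · have := (hvalp.1 hbit).2 i hij' hcip
          rw [hδ, if_pos hbit]
          left; omega
        · have := (hvalp.2 hbit).2 i hij' hcip
          rw [hδ, if_neg hbit]
          right; omega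
      · rw [hEN i hJi, hEN j hJj]
        exact hEB.2.1 i j hij hcij
    · intro i j hij hlt
      by_cases hJi : Jset C p i
      · have hJj : ¬ Jset C p j := by
          rintro ⟨-, hcj⟩
          have := hJi.2; omega
        obtain ⟨rfl, -⟩ := J_exit hC hck hkend i j hij hJi hJj
        rw [hEJ i hJi]
        by_cases hbit : p ∈ SCD C E
        · have h1 : C j < E i := hEB.2.2 i j hij hlt
          rw [hδ, if_pos hbit]; omega
        · have h1 := hend hbit j hij
          rw [hδ, if_neg hbit]; omega
      · rw [hEN i hJi]; exact hEB.2.2 i j hij hlt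
  -- SCD equation
  have goalS : SCD C E' = if p ∈ SCD C E then SCD C E \ {p} else insert p (SCD C E) := by
    ext i
    rcases eq_or_ne i p with hip | hne
    · rw [hip]
      by_cases hbit : p ∈ SCD C E
      · rw [if_pos hbit]
        simp only [Set.mem_diff, Set.mem_singleton_iff, not_true, and_false, iff_false]
        intro hmem
        rcases hpcase with hst | ⟨h, hh, hch, hJh⟩
        · have h1 := (scd_start (E := E') hst).mp hmem
          rw [hEJ p hJp, hδ, if_pos hbit] at h1
          have := (hvalp.1 hbit).1 hst
          omega
        · have h1 := (scd_inner (E := E') hh hch).mp hmem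
          rw [hEJ p hJp, hEN h hJh, hδ, if_pos hbit] at h1
          have := (hvalp.1 hbit).2 h hh hch
          omega
      · rw [if_neg hbit]
        simp only [Set.mem_insert_iff, true_or, iff_true]
        rcases hpcase with hst | ⟨h, hh, hch, hJh⟩
        · refine (scd_start (E := E') hst).mpr ?_
          rw [hEJ p hJp, hδ, if_neg hbit]
          have := (hvalp.2 hbit).1 hst
          omega
        · refine (scd_inner (E := E') hh hch).mpr ?_
          rw [hEJ p hJp, hEN h hJh, hδ, if_neg hbit]
          have := (hvalp.2 hbit).2 h hh hch
          omega
    · have hrhs : i ∈ (if p ∈ SCD C E then SCD C E \ {p} else insert p (SCD C E)) ↔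
          i ∈ SCD C E := by
        split
        · simp [hne]
        · simp [hne]
      rw [hrhs]
      by_cases hJ : Jset C p i
      · -- inside the block strictly after p
        have hne' : (i:ℕ) ≠ (p:ℕ) := fun hc => hne (Fin.ext hc)
        have hi0 : (i:ℕ) ≠ 0 := by
          have := Fin.le_def.mp hJ.1; omega
        obtain ⟨h, hh⟩ := exists_pred i hi0
        have hph : p ≤ h := by
          rw [Fin.le_def]
          have := Fin.le_def.mp hJ.1
          omega
        have hchp : C h = C p := blockEq hC hph (consec_le hh) hJ.2
        have hJh : Jset C p h := ⟨hph, hchp⟩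
        have hchi : C h = C i := hchp.trans hJ.2.symm
        rw [scd_inner (E := E') hh hchi, scd_inner (E := E) hh hchi,
          hEJ i hJ, hEJ h hJh]
        omega
      · have hEi : E' i = E i := hEN i hJ
        have hprev : ∀ h : Fin m, (i:ℕ) = (h:ℕ)+1 → C h = C i → E' h = E h := by
          intro h hh hch
          refine hEN h (fun hJh => ?_)
          have := (J_exit hC hck hkend h i hh hJh hJ).2
          omega
        constructor
        · rintro (⟨hst, hv⟩ | ⟨h, hh, hch, hv⟩)
          · exact Or.inl ⟨hst, by rw [hEi] at hv; exact hv⟩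
          · rw [hEi, hprev h hh hch] at hv
            exact Or.inr ⟨h, hh, hch, hv⟩
        · rintro (⟨hst, hv⟩ | ⟨h, hh, hch, hv⟩)
          · exact Or.inl ⟨hst, by rw [hEi]; exact hv⟩
          · rw [← hEi, ← hprev h hh hch] at hv
            exact Or.inr ⟨h, hh, hch, hv⟩
  -- involutivity
  refine ⟨goalA, goalD, goalC, goalB, goalS, ?_⟩
  have hflip : (p ∈ SCD C E' ↔ p ∉ SCD C E) := by
    rw [goalS]
    by_cases hbit : p ∈ SCD C E
    · simp [hbit]
    · simp [hbit]
  funext l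
  show (if Jset C p l then E' l + (if p ∈ SCD C E' then 1 else -1) else E' l) = E l
  by_cases hJ : Jset C p l
  · rw [if_pos hJ, hEJ l hJ]
    by_cases hbit : p ∈ SCD C E
    · rw [if_neg (fun hc => (hflip.mp hc) hbit), hδ, if_pos hbit]; ring
    · rw [if_pos (hflip.mpr hbit), hδ, if_neg hbit]; ring
  · rw [if_neg hJ, hEN l hJ]

end Invol


open Classical in
/-- The candidate Möbius function value. -/
noncomputable def nu (E C : Pm m) : ℤ :=
  if InBC C.1 E.1 then (-1) ^ (Nat.card (SCD C.1 E.1)) else 0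

lemma nu_pos {E C : Pm m} (h : InBC C.1 E.1) :
    nu E C = (-1) ^ (Nat.card (SCD C.1 E.1)) := by
  unfold nu; rw [if_pos h]

lemma nu_neg {E C : Pm m} (h : ¬ InBC C.1 E.1) : nu E C = 0 := by
  unfold nu; rw [if_neg h]

lemma inBC_self (C : Fin m → ℤ) : InBC C C :=
  ⟨fun _ _ => Or.inl rfl, fun _ _ _ hc => Or.inl hc.symm, fun _ _ _ h => h⟩

lemma scd_self (C : Fin m → ℤ) : SCD C C = ∅ := by
  ext i
  simp only [SCD, Set.mem_setOf_eq, Set.mem_empty_iff_false, iff_false]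
  rintro (⟨_, h⟩ | ⟨h, hh, hch, hE⟩) <;> omega

lemma nu_self (C : Pm m) : nu C C = 1 := by
  rw [nu_pos (inBC_self C.1), scd_self]
  simp

lemma relm_refl (D : Pm m) : relm D D :=
  ⟨fun _ => le_refl _, fun _ _ _ h => h⟩

lemma interval_finite (D C : Pm m) : {E : Pm m | relm D E ∧ relm E C}.Finite := by
  have hsub : {E : Pm m | relm D E ∧ relm E C} ⊆
      Subtype.val ⁻¹' (Set.pi Set.univ (fun i => Set.Icc (D.1 i) (C.1 i))) := by
    rintro E ⟨hd, hc⟩ i _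
    exact ⟨hd.1 i, hc.1 i⟩
  exact Set.Finite.subset
    (Set.Finite.preimage Subtype.val_injective.injOn
      (Set.Finite.pi (fun i => Set.finite_Icc _ _))) hsub

open Classical in
lemma sum_nu_zero (D C : Pm m) (hDC : relm D C) (hne : D ≠ C) :
    ∑ E ∈ (interval_finite D C).toFinset, nu E C = 0 := by
  classical
  have hCa : Antitone C.1 := C.2
  have hDa : Antitone D.1 := D.2
  have hDC' : relf D.1 C.1 := hDC
  have hex : ∃ i, D.1 i < C.1 i := by
    by_contra hc
    push_neg at hc
    exact hne (Subtype.ext (funext fun i => le_antisymm (hDC.1 i) (hc i)))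
  obtain ⟨p, k, hfr, hpk, hck, hkend, hcnt⟩ := exists_pk hCa hDa hDC' hex
  set s := (interval_finite D C).toFinset with hs
  have hside : ∀ x ∈ s, nu x C ≠ 0 → InBC C.1 x.1 := by
    intro x _ hx
    by_contra hcon
    exact hx (nu_neg hcon)
  rw [← Finset.sum_filter_of_ne hside]
  set t := s.filter (fun E => InBC C.1 E.1) with ht
  have hmem : ∀ E : Pm m, E ∈ t →
      Antitone (tog C.1 p E.1) ∧ relf D.1 (tog C.1 p E.1) ∧ relf (tog C.1 p E.1) C.1 ∧
      InBC C.1 (tog C.1 p E.1) ∧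
      (SCD C.1 (tog C.1 p E.1) =
        if p ∈ SCD C.1 E.1 then SCD C.1 E.1 \ {p} else insert p (SCD C.1 E.1)) ∧
      tog C.1 p (tog C.1 p E.1) = E.1 := by
    intro E hE
    rw [ht, Finset.mem_filter, hs, Set.Finite.mem_toFinset] at hE
    exact tog_good hCa hDa hDC' hfr hpk hck hkend hcnt E.1 E.2 hE.1.1 hE.1.2 hE.2
  refine Finset.sum_involution (fun E hE => (⟨tog C.1 p E.1, (hmem E hE).1⟩ : Pm m))
    ?_ ?_ ?_ ?_
  · -- sign cancellation
    intro a ha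
    obtain ⟨hanti, hrD, hrC, hB, hS, htt⟩ := hmem a ha
    have haB : InBC C.1 a.1 := (Finset.mem_filter.mp ha).2
    rw [nu_pos haB, nu_pos (E := (⟨tog C.1 p a.1, hanti⟩ : Pm m)) hB]
    show (-1 : ℤ) ^ Nat.card (SCD C.1 a.1) + (-1) ^ Nat.card (SCD C.1 (tog C.1 p a.1)) = 0
    rw [Nat.card_coe_set_eq, Nat.card_coe_set_eq, hS]
    by_cases hbit : p ∈ SCD C.1 a.1
    · rw [if_pos hbit]
      have h2 : p ∉ SCD C.1 a.1 \ {p} := fun hc => hc.2 rfl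
      have hcard : (SCD C.1 a.1).ncard = (SCD C.1 a.1 \ {p}).ncard + 1 := by
        conv_lhs => rw [show SCD C.1 a.1 = insert p (SCD C.1 a.1 \ {p}) by
          rw [Set.insert_diff_singleton, Set.insert_eq_of_mem hbit]]
        rw [Set.ncard_insert_of_notMem h2 (Set.toFinite _)]
      rw [hcard, pow_succ]
      ring
    · rw [if_neg hbit]
      rw [Set.ncard_insert_of_notMem hbit (Set.toFinite _), pow_succ]
      ring
  · -- g ≠ id on nonzero terms
    intro a ha _
    intro hc
    have hv := congrArg (fun E : Pm m => E.1 p) hc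
    dsimp only at hv
    have hJp : Jset C.1 p p := ⟨le_refl _, rfl⟩
    rw [show tog C.1 p a.1 p = a.1 p + (if p ∈ SCD C.1 a.1 then 1 else -1) by
      unfold tog; rw [if_pos hJp]] at hv
    split at hv <;> omega
  · -- maps into t
    intro a ha
    obtain ⟨hanti, hrD, hrC, hB, hS, htt⟩ := hmem a ha
    refine Finset.mem_filter.mpr ⟨?_, hB⟩
    exact (Set.Finite.mem_toFinset _).mpr ⟨hrD, hrC⟩
  · -- involutive
    intro a ha
    exact Subtype.ext ((hmem a ha).2.2.2.2.2)

end MoP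

/-- **Möbius function of `(𝒫_m, ≤_m)`**: if `μ` satisfies the defining recursion of the
Möbius function (`μ(C,C) = 1`, and `∑_{D ≤_m E ≤_m C} μ(E,C) = 0` whenever `D <_m C`;
every interval of `𝒫_m` is finite, so the sum is finite), then for all `D ≤_m C`,
`μ(D,C) = (−1)^{|S_C(D)|}` if `D ∈ 𝔹_C`, and `μ(D,C) = 0` otherwise. -/
theorem moebius_Pm (m : ℕ) (μ : Pm m → Pm m → ℤ)
    (h1 : ∀ C : Pm m, μ C C = 1)
    (h2 : ∀ D C : Pm m, relm D C → D ≠ C →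
      ∑ᶠ E ∈ {E : Pm m | relm D E ∧ relm E C}, μ E C = 0)
    (D C : Pm m) (hDC : relm D C) :
    (InBC C.1 D.1 → μ D C = (-1) ^ (Nat.card (SCD C.1 D.1))) ∧
    (¬ InBC C.1 D.1 → μ D C = 0) := by
  classical
  have key : ∀ n : ℕ, ∀ D C : Pm m, relm D C →
      (∑ i : Fin m, (C.1 i - D.1 i).toNat) ≤ n → μ D C = MoP.nu D C := by
    intro n
    induction n using Nat.strong_induction_on with
    | _ n ih =>
      intro D C hDC hn
      by_cases heq : D = C
      · subst heq; rw [h1, MoP.nu_self]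
      · have hz := h2 D C hDC heq
        rw [← Set.Finite.coe_toFinset (MoP.interval_finite D C),
          finsum_mem_coe_finset] at hz
        have hz2 := MoP.sum_nu_zero D C hDC heq
        set s := (MoP.interval_finite D C).toFinset with hs
        have hDs : D ∈ s := (Set.Finite.mem_toFinset _).mpr ⟨MoP.relm_refl D, hDC⟩
        have hsum1 := Finset.add_sum_erase s (fun E => μ E C) hDs
        have hsum2 := Finset.add_sum_erase s (fun E => MoP.nu E C) hDs
        have hEs : ∀ E ∈ s.erase D, μ E C = MoP.nu E C := by
          intro E hE
          rw [Finset.mem_erase] at hE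
          obtain ⟨hEne, hEmem⟩ := hE
          rw [hs, Set.Finite.mem_toFinset] at hEmem
          obtain ⟨hDE, hEC⟩ := hEmem
          have hlt : (∑ i : Fin m, (C.1 i - E.1 i).toNat) <
              (∑ i : Fin m, (C.1 i - D.1 i).toNat) := by
            have hexi : ∃ i, D.1 i < E.1 i := by
              by_contra hc; push_neg at hc
              exact hEne (Subtype.ext (funext fun i => le_antisymm (hc i) (hDE.1 i)))
            obtain ⟨i0, hi0⟩ := hexi
            apply Finset.sum_lt_sum
            · intro i _
              have := hDE.1 i
              omega
            · refine ⟨i0, Finset.mem_univ _, ?_⟩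
              have := hEC.1 i0
              omega
          exact ih _ (Nat.lt_of_lt_of_le hlt hn) E C hEC (le_refl _)
        rw [Finset.sum_congr rfl hEs] at hsum1
        linarith
  have hkey := key _ D C hDC (le_refl _)
  constructor
  · intro hB
    rw [hkey, MoP.nu_pos hB]
  · intro hB
    rw [hkey, MoP.nu_neg hB]
end
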